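/- arXiv:2206.10768 — 3 statements merged into one kernel-verified Lean document; each statement's English description precedes it below -/
import Mathlib

section
/- Let (M, g) be a relativistic spacetime with Levi-Civita derivative operator ∇, let γ: I → M be an embedded curve, let O be a neighborhood meeting γ[I], and let ḡ be a Lorentz-signature metric on O whose Levi-Civita derivative operator ∇̄ agrees with ∇ at every point of γ[I] ∩ O. If ḡ = g at some point p ∈ γ[I] ∩ O and γ[I] ∩ O is connected, then ḡ = g at every point of γ[I] ∩ O. (Proof idea: γᶜ∇_c(g_ab − ḡ_ab) = 0 along γ[I] ∩ O, so g − ḡ is parallel along the curve and vanishes at p.) -/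
/-!
Common framework: we work in a fixed global coordinate chart, i.e. on (open subsets of) ℝ⁴,
representing metrics by their component matrices, derivative operators (affine connections)
by their Christoffel symbols, and curvature, covariant derivatives, pullbacks, etc. by the
usual coordinate formulas.
-/

noncomputable section

open scoped BigOperators
open Matrix

/-- Points of the coordinate space ℝ⁴. -/
abbrev Pt : Type := Fin 4 → ℝ

/-- 4 × 4 real matrices, used for components of rank-2 covariant tensors. -/
abbrev Mat : Type := Matrix (Fin 4) (Fin 4) ℝ

/-- The components of the Minkowski metric, `diag (1, -1, -1, -1)`. -/
def eta : Mat := Matrix.diagonal ![1, -1, -1, -1]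

/-- A (symmetric) matrix has Lorentz signature iff it is congruent to the Minkowski form. -/
def LorentzSig (A : Mat) : Prop := ∃ P : Mat, IsUnit P.det ∧ Pᵀ * A * P = eta

/-- Partial derivative of a scalar field in the `b`-th coordinate direction. -/
def pd (f : Pt → ℝ) (b : Fin 4) (x : Pt) : ℝ := fderiv ℝ f x (Pi.single b 1)

/-- A derivative operator (affine connection), given by its Christoffel symbols
`Γ x a b c = Γᵃ_{bc}(x)` in the global chart. -/
abbrev Conn : Type := Pt → Fin 4 → Fin 4 → Fin 4 → ℝ

/-- A derivative operator is torsion-free on `O` iff its Christoffel symbols are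
symmetric in the lower indices there. -/
def TorsionFreeOn (Γ : Conn) (O : Set Pt) : Prop :=
  ∀ x ∈ O, ∀ a b c, Γ x a b c = Γ x a c b

/-- Smoothness of a connection on a set, componentwise. -/
def SmoothConnOn (Γ : Conn) (O : Set Pt) : Prop :=
  ∀ a b c, ContDiffOn ℝ (⊤ : ℕ∞) (fun x => Γ x a b c) O

/-- The Riemann curvature tensor `Rᵃ_{bcd}` of a derivative operator. -/
def riemann (Γ : Conn) (x : Pt) (a b c d : Fin 4) : ℝ :=
  pd (fun y => Γ y a d b) c x - pd (fun y => Γ y a c b) d x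
    + ∑ e, Γ x a c e * Γ x e d b - ∑ e, Γ x a d e * Γ x e c b

/-- A derivative operator is flat on `O` iff its Riemann curvature tensor vanishes there. -/
def FlatConnOn (Γ : Conn) (O : Set Pt) : Prop :=
  ∀ x ∈ O, ∀ a b c d, riemann Γ x a b c d = 0

/-- Christoffel symbols of the Levi-Civita derivative operator of a metric, i.e. of the
unique torsion-free derivative operator compatible with it. -/
def christoffel (g : Pt → Mat) : Conn := fun x a b c =>
  (1 / 2) * ∑ d, (g x)⁻¹ a d *
    (pd (fun y => g y d c) b x + pd (fun y => g y d b) c x - pd (fun y => g y b c) d x)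

/-- A metric is flat on `O` iff the Riemann tensor of its Levi-Civita operator vanishes. -/
def FlatMetricOn (g : Pt → Mat) (O : Set Pt) : Prop :=
  FlatConnOn (christoffel g) O

/-- Componentwise smoothness of a matrix-valued field on a set. -/
def SmoothMatOn (g : Pt → Mat) (O : Set Pt) : Prop :=
  ∀ a b, ContDiffOn ℝ (⊤ : ℕ∞) (fun x => g x a b) O

/-- A relativistic spacetime, presented in a global coordinate chart: a connected open
region of ℝ⁴ equipped with a smooth Lorentz-signature metric. -/
structure Spacetime where
  carrier : Set Pt
  isOpen : IsOpen carrier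
  connected : IsConnected carrier
  metric : Pt → Mat
  smooth : SmoothMatOn metric carrier
  symm : ∀ x ∈ carrier, (metric x)ᵀ = metric x
  lorentz : ∀ x ∈ carrier, LorentzSig (metric x)

/-- An embedded curve: smooth, regular (an immersion), and a topological embedding,
so that its image is a one-dimensional embedded submanifold. -/
structure IsEmbeddedCurve (I : Set ℝ) (γ : ℝ → Pt) : Prop where
  smooth : ContDiffOn ℝ (⊤ : ℕ∞) γ I
  embedding : Topology.IsEmbedding fun t : I => γ (t : ℝ)
  regular : ∀ t ∈ I, derivWithin γ I t ≠ 0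

/-- A Riemannian metric on `U`: smooth and positive definite there. -/
def RiemannianOn (h : Pt → Mat) (U : Set Pt) : Prop :=
  SmoothMatOn h U ∧ ∀ x ∈ U, (h x).PosDef

/-- Rank-`n` covariant tensor fields, by components. -/
abbrev Tensor (n : ℕ) : Type := Pt → (Fin n → Fin 4) → ℝ

/-- View a matrix-valued field as a rank-2 covariant tensor field. -/
def toT2 (g : Pt → Mat) : Tensor 2 := fun x idx => g x (idx 0) (idx 1)

/-- Pointwise difference of tensor fields. -/
def tsub {n : ℕ} (T T' : Tensor n) : Tensor n := fun x idx => T x idx - T' x idx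

/-- Covariant derivative of a covariant tensor field with respect to a derivative
operator; the new (derivative) index is the first index. -/
def covD (Γ : Conn) {n : ℕ} (T : Tensor n) : Tensor (n + 1) := fun x idx =>
  pd (fun y => T y (fun i => idx i.succ)) (idx 0) x
    - ∑ i : Fin n, ∑ c, Γ x c (idx 0) (idx i.succ) *
        T x (Function.update (fun j : Fin n => idx j.succ) i c)

/-- Iterated covariant derivative `∇ʲ T`. -/
def covIter (Γ : Conn) {n : ℕ} (T : Tensor n) : (j : ℕ) → Tensor (n + j)
  | 0 => T
  | j + 1 => covD Γ (covIter Γ T j)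

/-- The pointwise norm `|f|_h` of a covariant tensor, computed with the inverse of `h`:
`|f|_h = |h^{a₁b₁} ⋯ h^{aₙbₙ} f_{a₁…aₙ} f_{b₁…bₙ}|^{1/2}`. -/
def tnorm (h : Pt → Mat) {n : ℕ} (T : Tensor n) (x : Pt) : ℝ :=
  Real.sqrt |∑ a : Fin n → Fin 4, ∑ b : Fin n → Fin 4,
    (∏ i, (h x)⁻¹ (a i) (b i)) * T x a * T x b|

/-- The distance function
`d_U(f, f′; h, k) = max_{0 ≤ j ≤ k} sup_U |∇ʲ(f − f′)|_h`, where `∇` is the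
Levi-Civita derivative operator of `h`. -/
def dU (U : Set Pt) (h : Pt → Mat) {n : ℕ} (T T' : Tensor n) (k : ℕ) : ℝ :=
  ⨆ j : Fin (k + 1), ⨆ x : U, tnorm h (covIter (christoffel h) (tsub T T') j.1) (x : Pt)

/-- A diffeomorphism between subsets `U'` and `U` of ℝ⁴. -/
structure DiffeoOn (U' U : Set Pt) where
  toFun : Pt → Pt
  invFun : Pt → Pt
  mapsTo : Set.MapsTo toFun U' U
  mapsTo' : Set.MapsTo invFun U U'
  leftInv : ∀ x ∈ U', invFun (toFun x) = x
  rightInv : ∀ x ∈ U, toFun (invFun x) = x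
  smooth : ContDiffOn ℝ (⊤ : ℕ∞) toFun U'
  smoothInv : ContDiffOn ℝ (⊤ : ℕ∞) invFun U

/-- Jacobian matrix of a map `φ : ℝ⁴ → ℝ⁴`: `Jac φ x a b = ∂φᵃ/∂xᵇ (x)`. -/
def Jac (φ : Pt → Pt) (x : Pt) (a b : Fin 4) : ℝ := pd (fun y => φ y a) b x

/-- Pullback of a rank-2 covariant tensor (metric) along `φ`:
`(φ*g)_{ab}(x) = ∂_a φᶜ ∂_b φᵈ g_{cd}(φ(x))`. -/
def pull2 (φ : Pt → Pt) (g : Pt → Mat) : Pt → Mat := fun x =>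
  Matrix.of fun a b => ∑ c, ∑ d, Jac φ x c a * Jac φ x d b * g (φ x) c d

/-- Pullback of a rank-`n` covariant tensor field along `φ`. -/
def pullT (φ : Pt → Pt) {n : ℕ} (T : Tensor n) : Tensor n := fun x idx =>
  ∑ σ : Fin n → Fin 4, (∏ i, Jac φ x (σ i) (idx i)) * T (φ x) σ

/-- Pullback of a derivative operator along the diffeomorphism `φ` (with inverse `ψ`):
the usual inhomogeneous transformation law for Christoffel symbols. -/
def pullConn (φ ψ : Pt → Pt) (Γ : Conn) : Conn := fun x a b c =>
  ∑ e, Jac ψ (φ x) a e *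
    ((∑ f, ∑ g', Γ (φ x) e f g' * Jac φ x f b * Jac φ x g' c)
      + pd (fun y => Jac φ y e c) b x)

/-- Lie derivative of a metric along a vector field, in components:
`(L_ξ g)_{ab} = ξᶜ ∂_c g_{ab} + g_{cb} ∂_a ξᶜ + g_{ac} ∂_b ξᶜ`. -/
def lieD (ξ : Pt → Pt) (g : Pt → Mat) (x : Pt) (a b : Fin 4) : ℝ :=
  (∑ c, ξ x c * pd (fun y => g y a b) c x)
    + (∑ c, g x c b * pd (fun y => ξ y c) a x)
    + ∑ c, g x a c * pd (fun y => ξ y c) b x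

/-- Lie bracket of vector fields: `[X,Y]ᵃ = Xᶜ ∂_c Yᵃ − Yᶜ ∂_c Xᵃ`. -/
def bracket (X Y : Pt → Pt) (x : Pt) : Pt := fun a =>
  (∑ c, X x c * pd (fun y => Y y a) c x) - ∑ c, Y x c * pd (fun y => X y a) c x

lemma lorentz_isUnit_det {A : Mat} (h : LorentzSig A) : IsUnit A.det := by
  obtain ⟨P, hP, hPA⟩ := h
  have heta : eta.det = -1 := by
    simp [eta, Matrix.det_diagonal, Fin.prod_univ_four]
  have h2 : P.det * A.det * P.det = -1 := by
    have := congrArg Matrix.det hPA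
    rw [Matrix.det_mul, Matrix.det_mul, Matrix.det_transpose, heta] at this
    linarith [this]
  rw [isUnit_iff_ne_zero]
  intro h0
  rw [h0] at h2
  norm_num at h2

lemma pd_symm_swap {g : Pt → Mat} {U : Set Pt} (hU : IsOpen U)
    (hsymm : ∀ x ∈ U, (g x)ᵀ = g x) {x : Pt} (hx : x ∈ U) (u v c : Fin 4) :
    pd (fun y => g y u v) c x = pd (fun y => g y v u) c x := by
  have h : (fun y => g y u v) =ᶠ[nhds x] (fun y => g y v u) := by
    filter_upwards [hU.mem_nhds hx] with y hy
    have h2 := congrFun (congrFun (hsymm y hy).symm v) u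
    simpa using h2.symm
  unfold pd
  rw [h.fderiv_eq]

lemma compat {g : Pt → Mat} {U : Set Pt} (hU : IsOpen U)
    (hsymm : ∀ x ∈ U, (g x)ᵀ = g x) (hdet : ∀ x ∈ U, IsUnit (g x).det)
    {x : Pt} (hx : x ∈ U) (a b c : Fin 4) :
    pd (fun y => g y a b) c x
      = (∑ d, christoffel g x d c a * g x d b)
        + ∑ d, christoffel g x d c b * g x a d := by
  have hone : ∀ u e : Fin 4, (∑ d, (g x)⁻¹ d e * g x d u) = (1 : Mat) u e := by
    intro u e
    have h1 : (g x)ᵀ * (g x)⁻¹ = 1 := by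
      rw [hsymm x hx]; exact Matrix.mul_nonsing_inv _ (hdet x hx)
    have := congrFun (congrFun h1 u) e
    simpa [Matrix.mul_apply, Matrix.transpose_apply, mul_comm] using this
  have T1 : ∀ (u : Fin 4) (A : Fin 4 → ℝ),
      (∑ d, ((1/2 : ℝ) * ∑ e, (g x)⁻¹ d e * A e) * g x d u) = (1/2) * A u := by
    intro u A
    calc (∑ d, ((1/2 : ℝ) * ∑ e, (g x)⁻¹ d e * A e) * g x d u)
        = ∑ d, ∑ e, (1/2 : ℝ) * ((g x)⁻¹ d e * g x d u * A e) := by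
          refine Finset.sum_congr rfl fun d _ => ?_
          rw [Finset.mul_sum, Finset.sum_mul]
          exact Finset.sum_congr rfl fun e _ => by ring
      _ = ∑ e, ∑ d, (1/2 : ℝ) * ((g x)⁻¹ d e * g x d u * A e) := Finset.sum_comm
      _ = ∑ e, (1/2 : ℝ) * ((∑ d, (g x)⁻¹ d e * g x d u) * A e) := by
          refine Finset.sum_congr rfl fun e _ => ?_
          rw [Finset.sum_mul, Finset.mul_sum]
      _ = ∑ e, (1/2 : ℝ) * ((1 : Mat) u e * A e) := by
          refine Finset.sum_congr rfl fun e _ => ?_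
          rw [hone u e]
      _ = (1/2) * A u := by
          simp [Matrix.one_apply]
  have hgsym : ∀ u v : Fin 4, g x u v = g x v u := by
    intro u v
    simpa using congrFun (congrFun (hsymm x hx).symm u) v
  have e1 : (∑ d, christoffel g x d c a * g x d b)
      = (1/2) * (pd (fun y => g y b a) c x + pd (fun y => g y b c) a x
          - pd (fun y => g y c a) b x) := by
    have := T1 b (fun e => pd (fun y => g y e a) c x + pd (fun y => g y e c) a x
      - pd (fun y => g y c a) e x)
    rw [← this]
    exact Finset.sum_congr rfl fun d _ => by rw [christoffel]
  have e2 : (∑ d, christoffel g x d c b * g x a d)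
      = (1/2) * (pd (fun y => g y a b) c x + pd (fun y => g y a c) b x
          - pd (fun y => g y c b) a x) := by
    have := T1 a (fun e => pd (fun y => g y e b) c x + pd (fun y => g y e c) b x
      - pd (fun y => g y c b) e x)
    rw [← this]
    refine Finset.sum_congr rfl fun d _ => ?_
    rw [christoffel, hgsym a d]
  rw [e1, e2, pd_symm_swap hU hsymm hx b a c, pd_symm_swap hU hsymm hx b c a,
    pd_symm_swap hU hsymm hx c a b]
  ring

lemma clm_apply_eq_sum (L : Pt →L[ℝ] ℝ) (v : Pt) : L v = ∑ c, v c * L (Pi.single c 1) := by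
  have hv : v = ∑ c, v c • (Pi.single c 1 : Pt) := by
    conv_lhs => rw [pi_eq_sum_univ v]
    refine Finset.sum_congr rfl fun c _ => ?_
    congr 1
    funext j
    simp [Pi.single_apply, eq_comm]
  conv_lhs => rw [hv]
  rw [map_sum]
  refine Finset.sum_congr rfl fun c _ => ?_
  rw [_root_.map_smul, smul_eq_mul]

lemma continuousOn_pd {f : Pt → ℝ} {U : Set Pt} (hU : IsOpen U)
    (hf : ContDiffOn ℝ (⊤ : ℕ∞) f U) (b : Fin 4) : ContinuousOn (fun x => pd f b x) U :=
  (hf.continuousOn_fderiv_of_isOpen hU (by simp)).clm_apply continuousOn_const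

lemma continuousOn_entry {g : Pt → Mat} {U : Set Pt} (hsm : SmoothMatOn g U)
    (a b : Fin 4) : ContinuousOn (fun x => g x a b) U := (hsm a b).continuousOn

lemma continuousOn_matrix {g : Pt → Mat} {U : Set Pt} (hsm : SmoothMatOn g U) :
    ContinuousOn (fun x => g x) U := by
  apply continuousOn_pi.2
  intro i
  apply continuousOn_pi.2
  intro j
  exact (hsm i j).continuousOn

lemma continuousOn_inv_entry {g : Pt → Mat} {U : Set Pt}
    (hsm : SmoothMatOn g U) (hdet : ∀ x ∈ U, IsUnit (g x).det) (a b : Fin 4) :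
    ContinuousOn (fun x => (g x)⁻¹ a b) U := by
  have hg := continuousOn_matrix hsm
  have hdc : ContinuousOn (fun x => (g x).det) U :=
    (continuous_id.matrix_det).comp_continuousOn hg
  have hadj : ContinuousOn (fun x => (g x).adjugate a b) U :=
    ((continuous_apply b).comp ((continuous_apply a).comp
      continuous_id.matrix_adjugate)).comp_continuousOn hg
  have hinv : ContinuousOn (fun x => ((g x).det)⁻¹ * (g x).adjugate a b) U := by
    refine ContinuousOn.mul (hdc.inv₀ ?_) hadj
    intro x hx
    exact (hdet x hx).ne_zero  -- maybe IsUnit.ne_zero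
  refine hinv.congr ?_
  intro x hx
  show (g x)⁻¹ a b = _
  rw [Matrix.inv_def, Matrix.smul_apply, Ring.inverse_eq_inv', smul_eq_mul]

lemma continuousOn_christoffel {g : Pt → Mat} {U : Set Pt} (hU : IsOpen U)
    (hsm : SmoothMatOn g U) (hdet : ∀ x ∈ U, IsUnit (g x).det) (a b c : Fin 4) :
    ContinuousOn (fun x => christoffel g x a b c) U := by
  unfold christoffel
  refine ContinuousOn.mul continuousOn_const ?_
  refine continuousOn_finset_sum _ fun d _ => ?_
  refine ContinuousOn.mul (continuousOn_inv_entry hsm hdet a d) ?_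
  exact ((continuousOn_pd hU (hsm d c) b).add (continuousOn_pd hU (hsm d b) c)).sub
    (continuousOn_pd hU (hsm b c) d)

abbrev E4 : Type := Fin 4 → Fin 4 → ℝ

lemma key_interval
    (γ : ℝ → Pt) (I : Set ℝ) (hγs : ContDiffOn ℝ (⊤ : ℕ∞) γ I)
    (gb gm : Pt → Mat) (O U : Set Pt) (hO : IsOpen O) (hU : IsOpen U) (hOU : O ⊆ U)
    (hsmb : SmoothMatOn gb O) (hsymb : ∀ x ∈ O, (gb x)ᵀ = gb x)
    (hdetb : ∀ x ∈ O, IsUnit (gb x).det)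
    (hsmm : SmoothMatOn gm U) (hsymm : ∀ x ∈ U, (gm x)ᵀ = gm x)
    (hdetm : ∀ x ∈ U, IsUnit (gm x).det)
    (hΓ : ∀ t ∈ I, γ t ∈ O → ∀ a b c,
      christoffel gb (γ t) a b c = christoffel gm (γ t) a b c)
    (a b : ℝ) (hab : a < b) (hsub : Set.Icc a b ⊆ I) (hin : ∀ t ∈ Set.Icc a b, γ t ∈ O)
    (f : ℝ → E4) (hf : f = fun t i j => gb (γ t) i j - gm (γ t) i j) :
    ∃ K : NNReal, ∃ V : ℝ → E4 → E4,
      (∀ t, LipschitzWith K (V t)) ∧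
      (∀ t, V t 0 = 0) ∧
      ContinuousOn f (Set.Icc a b) ∧
      (∀ t ∈ Set.Icc a b, HasDerivWithinAt f (V t (f t)) (Set.Icc a b) t) := by
  set J := Set.Icc a b with hJdef
  have hJu : UniqueDiffOn ℝ J := uniqueDiffOn_Icc hab
  have hγJ : ContDiffOn ℝ (⊤ : ℕ∞) γ J := hγs.mono hsub
  have hγc : ContinuousOn γ J := hγJ.continuousOn
  set w : ℝ → Pt := derivWithin γ J with hwdef
  have hw : ContinuousOn w J := hγJ.continuousOn_derivWithin hJu (by simp)
  have hasD : ∀ t ∈ J, HasDerivWithinAt γ (w t) J t := fun t ht =>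
    ((hγJ.differentiableOn (by simp)) t ht).hasDerivWithinAt
  set G : ℝ → Fin 4 → Fin 4 → Fin 4 → ℝ :=
    fun t a' b' c' => christoffel gb (γ t) a' b' c' with hGdef
  have hGc : ∀ a' b' c', ContinuousOn (fun t => G t a' b' c') J := fun a' b' c' =>
    (continuousOn_christoffel hO hsmb hdetb a' b' c').comp hγc (fun t ht => hin t ht)
  set u : ℝ → ℝ := fun t => max a (min b t) with hudef
  have hu : Continuous u := continuous_const.max (continuous_const.min continuous_id)
  have huJ : ∀ t, u t ∈ J := by
    intro t
    refine ⟨le_max_left _ _, max_le hab.le (min_le_left _ _)⟩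
  have huid : ∀ t ∈ J, u t = t := by
    rintro t ⟨h1, h2⟩
    simp [hudef, min_eq_right h2, max_eq_right h1]
  -- coefficient bound function
  set B : ℝ → ℝ := fun t => ∑ c, |w t c| * (2 * ∑ e, ∑ d, |G t d c e|) with hBdef
  have hBc : ContinuousOn B J := by
    refine continuousOn_finset_sum _ fun c _ => ContinuousOn.mul ?_ ?_
    · exact ((continuousOn_pi.1 hw) c).abs
    · refine ContinuousOn.mul continuousOn_const ?_
      refine continuousOn_finset_sum _ fun e _ => ?_
      exact continuousOn_finset_sum _ fun d _ => (hGc d c e).abs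
  obtain ⟨M, hM⟩ : ∃ M, ∀ t ∈ J, ‖B t‖ ≤ M :=
    (isCompact_Icc).exists_bound_of_continuousOn hBc
  have hBM : ∀ t ∈ J, B t ≤ M := fun t ht => (le_abs_self _).trans (hM t ht)
  set K : NNReal := Real.toNNReal M with hKdef
  set V : ℝ → E4 → E4 := fun t y => fun a' b' =>
    ∑ c, w (u t) c * ((∑ d, G (u t) d c a' * y d b') + ∑ d, G (u t) d c b' * y a' d)
    with hVdef
  have hV0 : ∀ t, V t 0 = 0 := by
    intro t
    funext a' b'
    simp [hVdef]
  have hlin : ∀ t (y y' : E4) (a' b' : Fin 4), V t y a' b' - V t y' a' b'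
      = ∑ c, w (u t) c * ((∑ d, G (u t) d c a' * (y d b' - y' d b'))
        + ∑ d, G (u t) d c b' * (y a' d - y' a' d)) := by
    intro t y y' a' b'
    rw [← Finset.sum_sub_distrib]
    refine Finset.sum_congr rfl fun c _ => ?_
    have e1 : ∑ d, G (u t) d c a' * (y d b' - y' d b')
        = (∑ d, G (u t) d c a' * y d b') - ∑ d, G (u t) d c a' * y' d b' := by
      rw [← Finset.sum_sub_distrib]
      exact Finset.sum_congr rfl fun d _ => mul_sub _ _ _
    have e2 : ∑ d, G (u t) d c b' * (y a' d - y' a' d)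
        = (∑ d, G (u t) d c b' * y a' d) - ∑ d, G (u t) d c b' * y' a' d := by
      rw [← Finset.sum_sub_distrib]
      exact Finset.sum_congr rfl fun d _ => mul_sub _ _ _
    rw [e1, e2]
    ring
  have hbound : ∀ t (z : E4) (a' b' : Fin 4),
      |∑ c, w (u t) c * ((∑ d, G (u t) d c a' * z d b')
        + ∑ d, G (u t) d c b' * z a' d)| ≤ B (u t) * ‖z‖ := by
    intro t z a' b'
    have hz : ∀ i j, |z i j| ≤ ‖z‖ := by
      intro i j
      calc |z i j| = ‖z i j‖ := rfl
        _ ≤ ‖z i‖ := norm_le_pi_norm (z i) j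
        _ ≤ ‖z‖ := norm_le_pi_norm z i
    have hsum : ∀ (e' : Fin 4) (c : Fin 4) (yy : Fin 4 → ℝ), (∀ d, |yy d| ≤ ‖z‖) →
        |∑ d, G (u t) d c e' * yy d| ≤ (∑ e, ∑ d, |G (u t) d c e|) * ‖z‖ := by
      intro e' c yy hyy
      calc |∑ d, G (u t) d c e' * yy d| ≤ ∑ d, |G (u t) d c e' * yy d| :=
            Finset.abs_sum_le_sum_abs _ _
        _ ≤ ∑ d, |G (u t) d c e'| * ‖z‖ := by
            refine Finset.sum_le_sum fun d _ => ?_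
            rw [abs_mul]
            exact mul_le_mul_of_nonneg_left (hyy d) (abs_nonneg _)
        _ = (∑ d, |G (u t) d c e'|) * ‖z‖ := by rw [Finset.sum_mul]
        _ ≤ (∑ e, ∑ d, |G (u t) d c e|) * ‖z‖ := by
            refine mul_le_mul_of_nonneg_right ?_ (norm_nonneg _)
            exact Finset.single_le_sum (f := fun e => ∑ d, |G (u t) d c e|)
              (fun e _ => Finset.sum_nonneg fun d _ => abs_nonneg _) (Finset.mem_univ e')
    calc |∑ c, w (u t) c * ((∑ d, G (u t) d c a' * z d b') + ∑ d, G (u t) d c b' * z a' d)|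
        ≤ ∑ c, |w (u t) c * ((∑ d, G (u t) d c a' * z d b') + ∑ d, G (u t) d c b' * z a' d)| :=
          Finset.abs_sum_le_sum_abs _ _
      _ ≤ ∑ c, |w (u t) c| * ((∑ e, ∑ d, |G (u t) d c e|) * ‖z‖
            + (∑ e, ∑ d, |G (u t) d c e|) * ‖z‖) := by
          refine Finset.sum_le_sum fun c _ => ?_
          rw [abs_mul]
          refine mul_le_mul_of_nonneg_left ?_ (abs_nonneg _)
          refine (abs_add_le _ _).trans ?_
          exact add_le_add (hsum a' c _ (fun d => hz d b')) (hsum b' c _ (fun d => hz a' d))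
      _ = B (u t) * ‖z‖ := by
          rw [hBdef]
          conv_rhs => rw [Finset.sum_mul]
          refine Finset.sum_congr rfl fun c _ => by ring
  have hlip : ∀ t, LipschitzWith K (V t) := by
    intro t
    refine LipschitzWith.of_dist_le_mul fun y y' => ?_
    rw [dist_eq_norm, dist_eq_norm]
    have hKnn : (0:ℝ) ≤ (K : ℝ) * ‖y - y'‖ := by positivity
    refine (pi_norm_le_iff_of_nonneg hKnn).2 fun a' => ?_
    refine (pi_norm_le_iff_of_nonneg hKnn).2 fun b' => ?_
    have : (V t y - V t y') a' b' = V t y a' b' - V t y' a' b' := rfl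
    rw [Real.norm_eq_abs, this, hlin t y y' a' b']
    have hzz : ∀ i j, (y - y') i j = y i j - y' i j := fun i j => rfl
    have hb := hbound t (y - y') a' b'
    simp only [hzz] at hb
    refine hb.trans ?_
    refine mul_le_mul_of_nonneg_right ?_ (norm_nonneg _)
    refine (hBM (u t) (huJ t)).trans ?_
    exact Real.le_coe_toNNReal M
  refine ⟨K, V, hlip, hV0, ?_, ?_⟩
  · rw [hf]
    refine continuousOn_pi.2 fun i => continuousOn_pi.2 fun j => ContinuousOn.sub ?_ ?_
    · exact ((hsmb i j).continuousOn).comp hγc fun t ht => hin t ht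
    · exact ((hsmm i j).continuousOn).comp hγc fun t ht => hOU (hin t ht)
  · intro t ht
    refine hasDerivWithinAt_pi.2 fun a' => hasDerivWithinAt_pi.2 fun b' => ?_
    have hγtO : γ t ∈ O := hin t ht
    have hγtU : γ t ∈ U := hOU hγtO
    have hdb : HasDerivWithinAt (fun s => gb (γ s) a' b')
        (∑ c, w t c * pd (fun y => gb y a' b') c (γ t)) J t := by
      have hdiff : DifferentiableAt ℝ (fun x => gb x a' b') (γ t) :=
        ((hsmb a' b').contDiffAt (hO.mem_nhds hγtO)).differentiableAt (by simp)
      have hcomp := hdiff.hasFDerivAt.comp_hasDerivWithinAt t (hasD t ht)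
      refine hcomp.congr_deriv ?_
      rw [clm_apply_eq_sum]
      rfl
    have hdm : HasDerivWithinAt (fun s => gm (γ s) a' b')
        (∑ c, w t c * pd (fun y => gm y a' b') c (γ t)) J t := by
      have hdiff : DifferentiableAt ℝ (fun x => gm x a' b') (γ t) :=
        ((hsmm a' b').contDiffAt (hU.mem_nhds hγtU)).differentiableAt (by simp)
      have hcomp := hdiff.hasFDerivAt.comp_hasDerivWithinAt t (hasD t ht)
      refine hcomp.congr_deriv ?_
      rw [clm_apply_eq_sum]
      rfl
    have hsubd := hdb.sub hdm
    have hval : V t (f t) a' b'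
        = (∑ c, w t c * pd (fun y => gb y a' b') c (γ t))
          - (∑ c, w t c * pd (fun y => gm y a' b') c (γ t)) := by
      rw [← Finset.sum_sub_distrib]
      have hut : u t = t := huid t ht
      refine Finset.sum_congr rfl fun c _ => ?_
      rw [compat hO hsymb hdetb hγtO a' b' c, compat hU hsymm hdetm hγtU a' b' c]
      simp only [show ∀ d e' f', christoffel gm (γ t) d e' f' = christoffel gb (γ t) d e' f'
        from fun d e' f' => (hΓ t (hsub ht) hγtO d e' f').symm]
      simp only [hVdef, hGdef, hut, hf]
      have e1 : ∑ d, christoffel gb (γ t) d c a' * (gb (γ t) d b' - gm (γ t) d b')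
          = (∑ d, christoffel gb (γ t) d c a' * gb (γ t) d b')
            - ∑ d, christoffel gb (γ t) d c a' * gm (γ t) d b' := by
        rw [← Finset.sum_sub_distrib]
        exact Finset.sum_congr rfl fun d _ => mul_sub _ _ _
      have e2 : ∑ d, christoffel gb (γ t) d c b' * (gb (γ t) a' d - gm (γ t) a' d)
          = (∑ d, christoffel gb (γ t) d c b' * gb (γ t) a' d)
            - ∑ d, christoffel gb (γ t) d c b' * gm (γ t) a' d := by
        rw [← Finset.sum_sub_distrib]
        exact Finset.sum_congr rfl fun d _ => mul_sub _ _ _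
      rw [e1, e2]
      ring
    have hfeq : (fun s => f s a' b') = fun s => gb (γ s) a' b' - gm (γ s) a' b' := by
      funext s
      rw [hf]
    rw [hval]
    rw [show (fun s => f s a' b') = fun s => gb (γ s) a' b' - gm (γ s) a' b' from hfeq]
    exact hsubd

/-- If a Lorentz metric `ḡ` on a neighborhood `O` meeting an embedded curve `γ[I]` has the
same Levi-Civita derivative operator as the spacetime metric `g` at every point of
`γ[I] ∩ O`, agrees with `g` at some point `p ∈ γ[I] ∩ O`, and `γ[I] ∩ O` is connected,
then `ḡ = g` at every point of `γ[I] ∩ O`. -/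
theorem metric_agreement_along_curve (S : Spacetime) (I : Set ℝ) (γ : ℝ → Pt)
    (hγ : IsEmbeddedCurve I γ) (him : γ '' I ⊆ S.carrier)
    (O : Set Pt) (hO : IsOpen O) (hOM : O ⊆ S.carrier)
    (gbar : Pt → Mat) (hsm : SmoothMatOn gbar O)
    (hsymm : ∀ x ∈ O, (gbar x)ᵀ = gbar x)
    (hlor : ∀ x ∈ O, LorentzSig (gbar x))
    (hΓ : ∀ x ∈ γ '' I ∩ O, ∀ a b c,
      christoffel gbar x a b c = christoffel S.metric x a b c)
    (p : Pt) (hp : p ∈ γ '' I ∩ O) (hpeq : gbar p = S.metric p)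
    (hconn : IsConnected (γ '' I ∩ O)) :
    ∀ x ∈ γ '' I ∩ O, gbar x = S.metric x := by
  -- connectedness of the parameter set
  set C : Set ℝ := I ∩ γ ⁻¹' O with hCdef
  have himg : (fun t : I => γ (t : ℝ)) '' (Subtype.val ⁻¹' (γ ⁻¹' O)) = γ '' I ∩ O := by
    ext y
    constructor
    · rintro ⟨⟨t, htI⟩, htO, rfl⟩
      exact ⟨⟨t, htI, rfl⟩, htO⟩
    · rintro ⟨⟨t, htI, rfl⟩, hyO⟩
      exact ⟨⟨t, htI⟩, hyO, rfl⟩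
  have hpre : IsPreconnected (Subtype.val ⁻¹' (γ ⁻¹' O) : Set I) := by
    have := hγ.embedding.toIsInducing.isPreconnected_image
      (s := (Subtype.val ⁻¹' (γ ⁻¹' O) : Set I))
    rw [himg] at this
    exact this.1 hconn.isPreconnected
  have hCpre : IsPreconnected C := by
    have himg2 : Subtype.val '' (Subtype.val ⁻¹' (γ ⁻¹' O) : Set I) = C := by
      rw [Subtype.image_preimage_coe]
    rw [← himg2]
    exact hpre.image _ continuous_subtype_val.continuousOn
  have hCord : Set.OrdConnected C := hCpre.ordConnected
  -- data
  have hdetb : ∀ x ∈ O, IsUnit (gbar x).det := fun x hx => lorentz_isUnit_det (hlor x hx)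
  have hdetm : ∀ x ∈ S.carrier, IsUnit (S.metric x).det := fun x hx =>
    lorentz_isUnit_det (S.lorentz x hx)
  have hΓ' : ∀ t ∈ I, γ t ∈ O → ∀ a b c,
      christoffel gbar (γ t) a b c = christoffel S.metric (γ t) a b c :=
    fun t htI htO a b c => hΓ (γ t) ⟨⟨t, htI, rfl⟩, htO⟩ a b c
  set f : ℝ → E4 := fun t i j => gbar (γ t) i j - S.metric (γ t) i j with hfdef
  obtain ⟨⟨t0, ht0I, ht0⟩, hpO⟩ := hp
  have ht0C : t0 ∈ C := ⟨ht0I, by rw [Set.mem_preimage, ht0]; exact hpO⟩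
  have hft0 : f t0 = 0 := by
    funext i j
    rw [hfdef]
    simp only [ht0, hpeq, sub_self]
    rfl
  rintro x ⟨⟨t1, ht1I, rfl⟩, hxO⟩
  have ht1C : t1 ∈ C := ⟨ht1I, hxO⟩
  suffices hft1 : f t1 = 0 by
    funext i j
    have := congrFun (congrFun hft1 i) j
    simp only [hfdef, Pi.zero_apply] at this
    linarith [this]
  rcases lt_trichotomy t0 t1 with h01 | h01 | h01
  · -- forward in time
    have hsubC : Set.Icc t0 t1 ⊆ C := hCord.out ht0C ht1C
    obtain ⟨K, V, hlip, hV0, hcont, hderiv⟩ := key_interval γ I hγ.smooth gbar S.metric O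
      S.carrier hO S.isOpen hOM hsm hsymm hdetb S.smooth S.symm hdetm hΓ' t0 t1 h01
      (fun t ht => (hsubC ht).1) (fun t ht => (hsubC ht).2) f hfdef
    have heq := ODE_solution_unique (v := V) (K := K) hlip hcont
      (fun t ht => (hderiv t (Set.Ico_subset_Icc_self ht)).mono_of_mem_nhdsWithin
        (by
          rw [mem_nhdsWithin]
          exact ⟨Set.Iio t1, isOpen_Iio, ht.2,
            fun y hy => ⟨le_trans ht.1 hy.2, le_of_lt hy.1⟩⟩))
      (g := fun _ => (0 : E4)) continuousOn_const
      (fun t _ => by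
        rw [show V t ((fun _ => (0:E4)) t) = 0 from hV0 t]
        exact hasDerivWithinAt_const t _ 0)
      (by rw [hft0])
    exact heq (Set.right_mem_Icc.2 h01.le)
  · rw [← h01, hft0]
  · -- backward in time
    have hsubC : Set.Icc t1 t0 ⊆ C := hCord.out ht1C ht0C
    obtain ⟨K, V, hlip, hV0, hcont, hderiv⟩ := key_interval γ I hγ.smooth gbar S.metric O
      S.carrier hO S.isOpen hOM hsm hsymm hdetb S.smooth S.symm hdetm hΓ' t1 t0 h01
      (fun t ht => (hsubC ht).1) (fun t ht => (hsubC ht).2) f hfdef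
    have heq := ODE_solution_unique_of_mem_Icc_left (v := V) (K := K)
      (s := fun _ => Set.univ) (fun t _ => (hlip t).lipschitzOnWith) hcont
      (fun t ht => (hderiv t (Set.Ioc_subset_Icc_self ht)).mono_of_mem_nhdsWithin
        (by
          rw [mem_nhdsWithin]
          exact ⟨Set.Ioi t1, isOpen_Ioi, ht.1,
            fun y hy => ⟨le_of_lt hy.1, le_trans hy.2 ht.2⟩⟩))
      (fun t _ => trivial)
      (g := fun _ => (0 : E4)) continuousOn_const
      (fun t _ => by
        rw [show V t ((fun _ => (0:E4)) t) = 0 from hV0 t]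
        exact hasDerivWithinAt_const t _ 0)
      (fun t _ => trivial)
      (by rw [hft0])
    exact heq (Set.left_mem_Icc.2 h01.le)

end
end

section
/- Let (M, g) be a relativistic spacetime, γ an embedded curve, p ∈ γ[I], and let ḡ be a flat metric on a neighborhood O of p that agrees with g, together with its Levi-Civita derivative operator, on γ[I] ∩ O. Then for any smooth Riemannian metric h on O and any ε > 0, there exists a neighborhood U ⊆ O of p with compact closure contained in O such that d_U(g, ḡ; h, 1) < ε. -/
/-!
Common framework: we work in a fixed global coordinate chart, i.e. on (open subsets of) ℝ⁴,
representing metrics by their component matrices, derivative operators (affine connections)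
by their Christoffel symbols, and curvature, covariant derivatives, pullbacks, etc. by the
usual coordinate formulas.
-/

noncomputable section

open scoped BigOperators
open Matrix

/-! ### Auxiliary lemmas -/

lemma pd_continuousOn {f : Pt → ℝ} {O : Set Pt} (hO : IsOpen O) (hf : ContDiffOn ℝ (⊤ : ℕ∞) f O)
    (b : Fin 4) : ContinuousOn (fun x => pd f b x) O :=
  (hf.continuousOn_fderiv_of_isOpen hO (by simp)).clm_apply continuousOn_const

lemma pd_sub {f f' : Pt → ℝ} {x : Pt} (hf : DifferentiableAt ℝ f x)
    (hf' : DifferentiableAt ℝ f' x) (b : Fin 4) :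
    pd (fun y => f y - f' y) b x = pd f b x - pd f' b x := by
  unfold pd
  rw [fderiv_fun_sub hf hf']
  simp

lemma D_zero (D : Fin 4 → Fin 4 → Fin 4 → ℝ)
    (H : ∀ a b c, D a b c = D b a c + D c a b) : ∀ a b c, D a b c = 0 := by
  intro a b c
  linarith [H a b c, H b a c, H c b a, H c a b, H a c b, H b c a]

lemma LorentzSig.det_isUnit {A : Mat} (hA : LorentzSig A) : IsUnit A.det := by
  obtain ⟨P, hP, hPA⟩ := hA
  have heta : eta.det = -1 := by
    simp [eta, Matrix.det_diagonal, Fin.prod_univ_four]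
  have hdet : P.det * A.det * P.det = -1 := by
    rw [← heta, ← hPA]
    simp [Matrix.det_mul, Matrix.det_transpose]
  refine isUnit_iff_ne_zero.2 fun h0 => ?_
  rw [h0] at hdet
  norm_num at hdet

/-- From agreement of the metrics and their Christoffel symbols at a point (with the
metric invertible there), all first partial derivatives of the metrics agree there. -/
lemma christoffel_eq_implies_pd_eq (g gbar : Pt → Mat) (p : Pt)
    (hgp : gbar p = g p) (hgu : IsUnit (g p).det)
    (hch : ∀ a b c, christoffel gbar p a b c = christoffel g p a b c) :
    ∀ c a b, pd (fun y => g y a b) c p = pd (fun y => gbar y a b) c p := by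
  set D : Fin 4 → Fin 4 → Fin 4 → ℝ := fun c a b =>
    pd (fun y => g y a b) c p - pd (fun y => gbar y a b) c p with hD
  set W : Fin 4 → Fin 4 → Fin 4 → ℝ := fun d b c => D b d c + D c d b - D d b c with hW
  have hE : ∀ a b c, ∑ d, (g p)⁻¹ a d * W d b c = 0 := by
    intro a b c
    have h1 := hch a b c
    unfold christoffel at h1
    rw [hgp] at h1
    have h2 : ∑ d, (g p)⁻¹ a d * W d b c =
        (∑ d, (g p)⁻¹ a d *
          (pd (fun y => g y d c) b p + pd (fun y => g y d b) c p - pd (fun y => g y b c) d p))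
        - ∑ d, (g p)⁻¹ a d *
          (pd (fun y => gbar y d c) b p + pd (fun y => gbar y d b) c p
            - pd (fun y => gbar y b c) d p) := by
      rw [← Finset.sum_sub_distrib]
      refine Finset.sum_congr rfl fun d _ => ?_
      simp only [hW, hD]
      ring
    rw [h2]
    linarith
  have hmul : g p * (g p)⁻¹ = 1 := Matrix.mul_nonsing_inv _ hgu
  have hWz : ∀ e b c, W e b c = 0 := by
    intro e b c
    have h1 : ∑ a, g p e a * (∑ d, (g p)⁻¹ a d * W d b c) = 0 := by
      simp [hE]
    calc W e b c = ∑ d, (g p * (g p)⁻¹) e d * W d b c := by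
          rw [hmul]
          simp [Matrix.one_apply]
      _ = ∑ a, g p e a * ∑ d, (g p)⁻¹ a d * W d b c := by
          simp only [Matrix.mul_apply, Finset.sum_mul, Finset.mul_sum]
          rw [Finset.sum_comm]
          refine Finset.sum_congr rfl fun a _ => Finset.sum_congr rfl fun d _ => by ring
      _ = 0 := h1
  have hHz : ∀ a b c, D a b c = D b a c + D c a b := by
    intro a b c
    have := hWz a b c
    simp only [hW] at this
    linarith
  intro c a b
  have := D_zero D hHz c a b
  simp only [hD] at this
  linarith

lemma inv_entry_continuousOn {h : Pt → Mat} {O : Set Pt} (hs : SmoothMatOn h O)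
    (hdet : ∀ x ∈ O, IsUnit (h x).det) (i j : Fin 4) :
    ContinuousOn (fun x => (h x)⁻¹ i j) O := by
  have hc : ContinuousOn (fun x => h x) O :=
    continuousOn_pi.2 fun a => continuousOn_pi.2 fun b => (hs a b).continuousOn
  have hdetc : ContinuousOn (fun x => (h x).det) O :=
    ((continuous_id.matrix_det).comp_continuousOn hc)
  have hadjc : ContinuousOn (fun x => (h x).adjugate i j) O := by
    have : ContinuousOn (fun x => (h x).adjugate) O :=
      (continuous_id.matrix_adjugate).comp_continuousOn hc
    exact ((continuous_apply j).comp ((continuous_apply i))).comp_continuousOn this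
  have heq : ∀ x ∈ O, (h x)⁻¹ i j = (h x).det⁻¹ * (h x).adjugate i j := by
    intro x hx
    rw [Matrix.inv_def, Ring.inverse_eq_inv]
    simp [Matrix.smul_apply]
  refine ContinuousOn.congr ?_ heq
  exact (hdetc.inv₀ fun x hx => (hdet x hx).ne_zero).mul hadjc

lemma christoffel_continuousOn {g : Pt → Mat} {O : Set Pt} (hO : IsOpen O)
    (hs : SmoothMatOn g O) (hdet : ∀ x ∈ O, IsUnit (g x).det) (a b c : Fin 4) :
    ContinuousOn (fun x => christoffel g x a b c) O := by
  unfold christoffel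
  refine ContinuousOn.mul continuousOn_const ?_
  refine continuousOn_finset_sum _ fun d _ => ?_
  exact (inv_entry_continuousOn hs hdet a d).mul
    (((pd_continuousOn hO (hs d c) b).add (pd_continuousOn hO (hs d b) c)).sub
      (pd_continuousOn hO (hs b c) d))

lemma tnorm_continuousOn {h : Pt → Mat} {O : Set Pt} {n : ℕ} {T : Tensor n}
    (hinv : ∀ i j, ContinuousOn (fun x => (h x)⁻¹ i j) O)
    (hT : ∀ idx, ContinuousOn (fun x => T x idx) O) :
    ContinuousOn (fun x => tnorm h T x) O := by
  unfold tnorm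
  refine Real.continuous_sqrt.comp_continuousOn ?_
  refine continuous_abs.comp_continuousOn ?_
  refine continuousOn_finset_sum _ fun a _ => continuousOn_finset_sum _ fun b _ => ?_
  exact ((continuousOn_finset_prod _ fun i _ => hinv (a i) (b i)).mul (hT a)).mul (hT b)

lemma covD_continuousOn {Γ : Conn} {O : Set Pt} (hO : IsOpen O) {n : ℕ} {T : Tensor n}
    (hT : ∀ idx, ContDiffOn ℝ (⊤ : ℕ∞) (fun x => T x idx) O)
    (hΓ : ∀ a b c, ContinuousOn (fun x => Γ x a b c) O) (idx : Fin (n + 1) → Fin 4) :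
    ContinuousOn (fun x => covD Γ T x idx) O := by
  unfold covD
  refine ContinuousOn.sub (pd_continuousOn hO (hT _) _) ?_
  refine continuousOn_finset_sum _ fun i _ => continuousOn_finset_sum _ fun c _ => ?_
  exact (hΓ _ _ _).mul ((hT _).continuousOn)

lemma tnorm_eq_zero {h : Pt → Mat} {n : ℕ} {T : Tensor n} {x : Pt}
    (hT : ∀ idx, T x idx = 0) : tnorm h T x = 0 := by
  simp [tnorm, hT]
/-- Let `ḡ` be a flat metric on a neighborhood `O` of a point `p` of an embedded curve
that agrees with the spacetime metric `g`, together with its Levi-Civita derivative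
operator, on `γ[I] ∩ O`.  Then for any smooth Riemannian metric `h` on `O` and any
`ε > 0` there is a neighborhood `U ⊆ O` of `p`, with compact closure contained in `O`,
with `d_U(g, ḡ; h, 1) < ε`. -/
theorem first_order_flat_approximation (S : Spacetime) (I : Set ℝ) (γ : ℝ → Pt)
    (hγ : IsEmbeddedCurve I γ) (him : γ '' I ⊆ S.carrier)
    (p : Pt) (hp : p ∈ γ '' I)
    (O : Set Pt) (hO : IsOpen O) (hpO : p ∈ O) (hOM : O ⊆ S.carrier)
    (gbar : Pt → Mat) (hsm : SmoothMatOn gbar O)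
    (hlor : ∀ x ∈ O, LorentzSig (gbar x))
    (hflat : FlatMetricOn gbar O)
    (hagree : ∀ x ∈ γ '' I ∩ O,
      gbar x = S.metric x ∧
      ∀ a b c, christoffel gbar x a b c = christoffel S.metric x a b c)
    (h : Pt → Mat) (hh : RiemannianOn h O) (ε : ℝ) (hε : 0 < ε) :
    ∃ U : Set Pt, IsOpen U ∧ p ∈ U ∧ U ⊆ O ∧ closure U ⊆ O ∧ IsCompact (closure U) ∧
      dU U h (toT2 S.metric) (toT2 gbar) 1 < ε := by
  have hpM : p ∈ S.carrier := hOM hpO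
  have hag := hagree p ⟨hp, hpO⟩
  have hgp : gbar p = S.metric p := hag.1
  have hgu : IsUnit (S.metric p).det := (S.lorentz p hpM).det_isUnit
  have hpdeq : ∀ c a b, pd (fun y => S.metric y a b) c p = pd (fun y => gbar y a b) c p :=
    christoffel_eq_implies_pd_eq S.metric gbar p hgp hgu hag.2
  have hdg : ∀ a b : Fin 4, DifferentiableAt ℝ (fun y => S.metric y a b) p := fun a b =>
    ((S.smooth a b).contDiffAt (S.isOpen.mem_nhds hpM)).differentiableAt (by simp)
  have hdgb : ∀ a b : Fin 4, DifferentiableAt ℝ (fun y => gbar y a b) p := fun a b =>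
    ((hsm a b).contDiffAt (hO.mem_nhds hpO)).differentiableAt (by simp)
  have hDpd : ∀ c a b : Fin 4, pd (fun y => S.metric y a b - gbar y a b) c p = 0 := by
    intro c a b
    rw [pd_sub (hdg a b) (hdgb a b) c, hpdeq c a b, sub_self]
  set T : Tensor 2 := tsub (toT2 S.metric) (toT2 gbar) with hTdef
  have hT0 : ∀ idx, T p idx = 0 := by
    intro idx
    simp [hTdef, tsub, toT2, hgp]
  have hT1 : ∀ idx : Fin 3 → Fin 4, covD (christoffel h) T p idx = 0 := by
    intro idx
    unfold covD
    have e1 : (fun y => T y fun i => idx i.succ)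
        = fun y => S.metric y (idx 1) (idx 2) - gbar y (idx 1) (idx 2) := by
      funext y
      simp [hTdef, tsub, toT2, Fin.succ_zero_eq_one, Fin.succ_one_eq_two]
    rw [e1, hDpd]
    simp [hT0]
  have hTsm : ∀ idx : Fin 2 → Fin 4, ContDiffOn ℝ (⊤ : ℕ∞) (fun x => T x idx) O := fun idx =>
    ((S.smooth _ _).mono hOM).sub (hsm _ _)
  have hTc : ∀ idx, ContinuousOn (fun x => T x idx) O := fun idx => (hTsm idx).continuousOn
  have hhdet : ∀ x ∈ O, IsUnit (h x).det := fun x hx =>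
    isUnit_iff_ne_zero.2 (hh.2 x hx).det_pos.ne'
  have hinv : ∀ i j, ContinuousOn (fun x => (h x)⁻¹ i j) O := inv_entry_continuousOn hh.1 hhdet
  have hΓc : ∀ a b c, ContinuousOn (fun x => christoffel h x a b c) O :=
    christoffel_continuousOn hO hh.1 hhdet
  have hF0 : ContinuousOn (fun x => tnorm h T x) O := tnorm_continuousOn hinv hTc
  have hF1 : ContinuousOn (fun x => tnorm h (covD (christoffel h) T) x) O :=
    tnorm_continuousOn hinv fun idx => covD_continuousOn hO hTsm hΓc idx
  have h0p : tnorm h T p = 0 := tnorm_eq_zero hT0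
  have h1p : tnorm h (covD (christoffel h) T) p = 0 := tnorm_eq_zero hT1
  have hε2 : (0:ℝ) < ε / 2 := half_pos hε
  have hn0 : {x | tnorm h T x < ε / 2} ∈ nhds p :=
    (hF0.continuousAt (hO.mem_nhds hpO)).preimage_mem_nhds
      (Iio_mem_nhds (by rw [h0p]; exact hε2))
  have hn1 : {x | tnorm h (covD (christoffel h) T) x < ε / 2} ∈ nhds p :=
    (hF1.continuousAt (hO.mem_nhds hpO)).preimage_mem_nhds
      (Iio_mem_nhds (by rw [h1p]; exact hε2))
  have hnall : ({x | tnorm h T x < ε / 2} ∩ {x | tnorm h (covD (christoffel h) T) x < ε / 2} ∩ O)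
      ∈ nhds p := Filter.inter_mem (Filter.inter_mem hn0 hn1) (hO.mem_nhds hpO)
  obtain ⟨δ, hδ, hball⟩ := Metric.mem_nhds_iff.1 hnall
  refine ⟨Metric.ball p (δ / 2), Metric.isOpen_ball, Metric.mem_ball_self (by linarith),
    ?_, ?_, ?_, ?_⟩
  · exact fun x hx => (hball (Metric.ball_subset_ball (by linarith) hx)).2
  · intro x hx
    have hx' : x ∈ Metric.closedBall p (δ / 2) :=
      Metric.closure_ball_subset_closedBall hx
    exact (hball (Metric.closedBall_subset_ball (by linarith) hx')).2
  · exact (isCompact_closedBall p (δ / 2)).of_isClosed_subset isClosed_closure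
      Metric.closure_ball_subset_closedBall
  · have key : ∀ x ∈ Metric.ball p (δ / 2),
        tnorm h T x < ε / 2 ∧ tnorm h (covD (christoffel h) T) x < ε / 2 := by
      intro x hx
      have := hball (Metric.ball_subset_ball (by linarith) hx)
      exact ⟨this.1.1, this.1.2⟩
    have hle : dU (Metric.ball p (δ / 2)) h (toT2 S.metric) (toT2 gbar) 1 ≤ ε / 2 := by
      unfold dU
      refine Real.iSup_le (fun j => Real.iSup_le (fun x => ?_) hε2.le) hε2.le
      fin_cases j
      · exact (key x x.2).1.le
      · exact (key x x.2).2.le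
    linarith

end
end

section
/- Every relativistic spacetime admits local approximate Poincaré symmetries*: for every relativistic spacetime (M, g) and every point p ∈ M, there exist a neighborhood O of p and ten smooth vector fields on O whose Lie brackets satisfy exactly the commutation relations of the Poincaré algebra (four commuting translation generators, six generators of the Lorentz algebra, with the standard mixed brackets), and such that the Lie derivative of g along each of these ten vector fields vanishes at p. -/
/-!
Common framework: we work in a fixed global coordinate chart, i.e. on (open subsets of) ℝ⁴,
representing metrics by their component matrices, derivative operators (affine connections)
by their Christoffel symbols, and curvature, covariant derivatives, pullbacks, etc. by the
usual coordinate formulas.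
-/

noncomputable section

open scoped BigOperators
open Matrix

namespace LAP

attribute [local fun_prop] DifferentiableAt.sum ContDiff.sum

/-! ### pd toolkit -/

lemma pd_congr {f g : Pt → ℝ} {x : Pt} (h : f =ᶠ[nhds x] g) (b : Fin 4) : pd f b x = pd g b x := by
  unfold pd; rw [h.fderiv_eq]

lemma pd_const (c : ℝ) (b : Fin 4) (x : Pt) : pd (fun _ => c) b x = 0 := by
  simp [pd]

lemma pd_add {f g : Pt → ℝ} {x : Pt} (hf : DifferentiableAt ℝ f x) (hg : DifferentiableAt ℝ g x)
    (b : Fin 4) : pd (fun y => f y + g y) b x = pd f b x + pd g b x := by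
  simp [pd, fderiv_fun_add hf hg]

lemma pd_sub {f g : Pt → ℝ} {x : Pt} (hf : DifferentiableAt ℝ f x) (hg : DifferentiableAt ℝ g x)
    (b : Fin 4) : pd (fun y => f y - g y) b x = pd f b x - pd g b x := by
  simp [pd, fderiv_fun_sub hf hg]

lemma pd_mul {f g : Pt → ℝ} {x : Pt} (hf : DifferentiableAt ℝ f x) (hg : DifferentiableAt ℝ g x)
    (b : Fin 4) : pd (fun y => f y * g y) b x = f x * pd g b x + g x * pd f b x := by
  simp [pd, fderiv_fun_mul hf hg]

lemma pd_const_mul {f : Pt → ℝ} {x : Pt} (hf : DifferentiableAt ℝ f x) (c : ℝ)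
    (b : Fin 4) : pd (fun y => c * f y) b x = c * pd f b x := by
  simp [pd, fderiv_const_mul hf]

lemma pd_sum {ι : Type*} {s : Finset ι} {f : ι → Pt → ℝ} {x : Pt}
    (h : ∀ i ∈ s, DifferentiableAt ℝ (f i) x) (b : Fin 4) :
    pd (fun y => ∑ i ∈ s, f i y) b x = ∑ i ∈ s, pd (f i) b x := by
  simp [pd, fderiv_fun_sum h]

lemma pd_coord (i b : Fin 4) (x : Pt) : pd (fun y : Pt => y i) b x = if i = b then 1 else 0 := by
  have h : (fun y : Pt => y i) = (ContinuousLinearMap.proj (R := ℝ) (φ := fun _ : Fin 4 => ℝ) i) := rfl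
  rw [pd, h, ContinuousLinearMap.fderiv]
  simp [Pi.single_apply]

lemma pd_coord_sub (i b : Fin 4) (q : ℝ) (x : Pt) :
    pd (fun y : Pt => y i - q) b x = if i = b then 1 else 0 := by
  rw [pd_sub (by fun_prop) (by fun_prop), pd_const, pd_coord, sub_zero]

/-! ### smoothness helpers -/

lemma contDiff_finprod {ι : Type*} [DecidableEq ι] (s : Finset ι) (f : ι → Pt → ℝ)
    (h : ∀ i ∈ s, ContDiff ℝ (⊤ : ℕ∞) (f i)) : ContDiff ℝ (⊤ : ℕ∞) (fun x => ∏ i ∈ s, f i x) := by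
  induction s using Finset.induction with
  | empty => simpa using contDiff_const
  | @insert a s ha ih =>
      simp only [Finset.prod_insert ha]
      exact (h a (Finset.mem_insert_self a s)).mul
        (ih fun i hi => h i (Finset.mem_insert_of_mem hi))

lemma contDiff_det {N : Pt → Mat} (h : ∀ i j, ContDiff ℝ (⊤ : ℕ∞) fun x => N x i j) :
    ContDiff ℝ (⊤ : ℕ∞) fun x => (N x).det := by
  simp only [Matrix.det_apply']
  exact ContDiff.sum fun σ _ => (contDiff_const.mul
    (contDiff_finprod Finset.univ _ fun i _ => h (σ i) i))

lemma contDiff_adjugate {N : Pt → Mat} (h : ∀ i j, ContDiff ℝ (⊤ : ℕ∞) fun x => N x i j) (a b : Fin 4) :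
    ContDiff ℝ (⊤ : ℕ∞) fun x => (N x).adjugate a b := by
  simp only [Matrix.adjugate_apply]
  refine contDiff_det fun i j => ?_
  by_cases hib : i = b
  · simp only [hib, Matrix.updateRow_apply, if_pos rfl]
    exact contDiff_const
  · simp only [Matrix.updateRow_apply, if_neg hib]
    exact h i j

lemma inv_entry (M : Mat) (a b : Fin 4) : M⁻¹ a b = (M.det)⁻¹ * M.adjugate a b := by
  rw [Matrix.inv_def, Ring.inverse_eq_inv']
  simp [Matrix.smul_apply, smul_eq_mul]

lemma mulVec_entry (M : Mat) (v : Pt) (i : Fin 4) : (M *ᵥ v) i = ∑ j, M i j * v j := by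
  simp [Matrix.mulVec, dotProduct]



section Setup
variable (A : Mat) (Γ : Fin 4 → Fin 4 → Fin 4 → ℝ) (p : Pt)

/-- Matrix `M(x) = I + Γ·(x-p)`. -/
def MM (x : Pt) : Mat :=
  Matrix.of fun e b => (if e = b then (1:ℝ) else 0) + ∑ d, Γ e b d * (x d - p d)

lemma MM_apply (x : Pt) (e b : Fin 4) :
    MM Γ p x e b = (if e = b then (1:ℝ) else 0) + ∑ d, Γ e b d * (x d - p d) := rfl

lemma MM_p : MM Γ p p = 1 := by
  ext e b; simp [MM_apply, Matrix.one_apply]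

/-- Quadratic part: normal-coordinate chart before the linear change. -/
def qpart (b : Fin 4) (x : Pt) : ℝ :=
  (x b - p b) + (1/2) * ∑ c, ∑ d, Γ b c d * ((x c - p c) * (x d - p d))

def psiF (x : Pt) : Pt := A⁻¹ *ᵥ fun b => qpart Γ p b x

lemma psiF_p : psiF A Γ p p = 0 := by
  have : (fun b => qpart Γ p b p) = (0 : Pt) := by
    funext b; simp [qpart]
  rw [psiF, this, Matrix.mulVec_zero]

/-- Affine "standard" field with data `(v, K)`. -/
def stdF (v : Pt) (K : Mat) (z : Pt) : Pt := v + K *ᵥ z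

def wF (v : Pt) (K : Mat) (x : Pt) : Pt := A *ᵥ stdF v K (psiF A Γ p x)

def fieldF (v : Pt) (K : Mat) (x : Pt) : Pt := (MM Γ p x)⁻¹ *ᵥ wF A Γ p v K x

/-! ### smoothness -/

lemma contDiff_MM_entry (e b : Fin 4) : ContDiff ℝ (⊤ : ℕ∞) fun x => MM Γ p x e b := by
  simp only [MM_apply]
  fun_prop

lemma contDiff_qpart (b : Fin 4) : ContDiff ℝ (⊤ : ℕ∞) (qpart Γ p b) := by
  unfold qpart; fun_prop

lemma contDiff_psiF (e : Fin 4) : ContDiff ℝ (⊤ : ℕ∞) fun x => psiF A Γ p x e := by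
  simp only [psiF, mulVec_entry]
  exact ContDiff.sum fun b _ => contDiff_const.mul (contDiff_qpart Γ p b)

lemma contDiff_wF (v : Pt) (K : Mat) (a : Fin 4) : ContDiff ℝ (⊤ : ℕ∞) fun x => wF A Γ p v K x a := by
  simp only [wF, stdF, mulVec_entry, Pi.add_apply]
  exact ContDiff.sum fun b _ => contDiff_const.mul <| contDiff_const.add <|
    ContDiff.sum fun d _ => contDiff_const.mul (contDiff_psiF A Γ p d)

lemma contDiff_detMM : ContDiff ℝ (⊤ : ℕ∞) fun x => (MM Γ p x).det :=
  contDiff_det fun i j => contDiff_MM_entry Γ p i j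

lemma isOpen_Od : IsOpen {x : Pt | (MM Γ p x).det ≠ 0} := by
  have : {x : Pt | (MM Γ p x).det ≠ 0} = (fun x => (MM Γ p x).det) ⁻¹' {(0:ℝ)}ᶜ := rfl
  rw [this]
  exact (isOpen_compl_singleton).preimage (contDiff_detMM Γ p).continuous

lemma fieldF_comp_eq (v : Pt) (K : Mat) (x : Pt) (a : Fin 4) :
    fieldF A Γ p v K x a
      = ((MM Γ p x).det)⁻¹ * ∑ b, (MM Γ p x).adjugate a b * wF A Γ p v K x b := by
  rw [fieldF, mulVec_entry, Finset.mul_sum]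
  exact Finset.sum_congr rfl fun b _ => by rw [inv_entry]; ring

lemma contDiffOn_fieldF (v : Pt) (K : Mat) (a : Fin 4) :
    ContDiffOn ℝ (⊤ : ℕ∞) (fun x => fieldF A Γ p v K x a) {x : Pt | (MM Γ p x).det ≠ 0} := by
  simp only [fieldF_comp_eq]
  refine ContDiffOn.mul (ContDiffOn.inv ((contDiff_detMM Γ p).contDiffOn) fun x hx => hx) ?_
  exact (ContDiff.sum fun b _ =>
    (contDiff_adjugate (fun i j => contDiff_MM_entry Γ p i j) a b).mul
      (contDiff_wF A Γ p v K b)).contDiffOn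

lemma diffAt_fieldF {x : Pt} (hx : (MM Γ p x).det ≠ 0) (v : Pt) (K : Mat) (a : Fin 4) :
    DifferentiableAt ℝ (fun y => fieldF A Γ p v K y a) x :=
  ((contDiffOn_fieldF A Γ p v K a).differentiableOn (by simp)).differentiableAt
    ((isOpen_Od Γ p).mem_nhds hx)

end Setup

section Calc
variable (A : Mat) (Γ : Fin 4 → Fin 4 → Fin 4 → ℝ) (p : Pt)

lemma diff_qpart (b : Fin 4) (x : Pt) : DifferentiableAt ℝ (qpart Γ p b) x :=
  ((contDiff_qpart Γ p b).differentiable (by simp)).differentiableAt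

lemma pd_qpart (hΓ : ∀ a b c, Γ a b c = Γ a c b) (b c : Fin 4) (x : Pt) :
    pd (qpart Γ p b) c x = MM Γ p x b c := by
  have h1 : ∀ c' d : Fin 4, pd (fun y : Pt => Γ b c' d * ((y c' - p c') * (y d - p d))) c x
      = Γ b c' d * ((x c' - p c') * (if d = c then 1 else 0)
                    + (x d - p d) * (if c' = c then 1 else 0)) := by
    intro c' d
    rw [pd_const_mul (by fun_prop), pd_mul (by fun_prop) (by fun_prop),
        pd_coord_sub, pd_coord_sub]
  have h2 : pd (fun y : Pt => ∑ c', ∑ d, Γ b c' d * ((y c' - p c') * (y d - p d))) c x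
      = ∑ c', ∑ d, Γ b c' d * ((x c' - p c') * (if d = c then 1 else 0)
                    + (x d - p d) * (if c' = c then 1 else 0)) := by
    rw [pd_sum (fun i _ => by fun_prop) c]
    refine Finset.sum_congr rfl fun c' _ => ?_
    rw [pd_sum (fun i _ => by fun_prop) c]
    exact Finset.sum_congr rfl fun d _ => h1 c' d
  have e0 : pd (qpart Γ p b) c x
      = (if b = c then 1 else 0)
        + (1/2) * ∑ c', ∑ d, Γ b c' d * ((x c' - p c') * (if d = c then 1 else 0)
                    + (x d - p d) * (if c' = c then 1 else 0)) := by
    unfold qpart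
    rw [pd_add (by fun_prop) (by fun_prop), pd_coord_sub, pd_const_mul (by fun_prop), h2]
  rw [e0, MM_apply]
  congr 1
  have e1 : ∑ c', ∑ d, Γ b c' d * ((x c' - p c') * (if d = c then 1 else 0)
                    + (x d - p d) * (if c' = c then 1 else 0))
      = (∑ c', Γ b c' c * (x c' - p c')) + ∑ d, Γ b c d * (x d - p d) := by
    simp only [mul_add, Finset.sum_add_distrib]
    congr 1
    · refine Finset.sum_congr rfl fun c' _ => ?_
      simp [mul_ite, Finset.sum_ite_eq', mul_comm]
    · rw [Finset.sum_comm]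
      refine Finset.sum_congr rfl fun d _ => ?_
      simp [mul_ite, Finset.sum_ite_eq', mul_comm]
  have e2 : ∑ c', Γ b c' c * (x c' - p c') = ∑ d, Γ b c d * (x d - p d) :=
    Finset.sum_congr rfl fun d _ => by rw [hΓ b d c]
  rw [e1, e2]; ring

lemma pd_psiF (hΓ : ∀ a b c, Γ a b c = Γ a c b) (e c : Fin 4) (x : Pt) :
    pd (fun y => psiF A Γ p y e) c x = (A⁻¹ * MM Γ p x) e c := by
  simp only [psiF, mulVec_entry]
  rw [pd_sum (fun b _ => (diff_qpart Γ p b x).const_mul _) c, Matrix.mul_apply]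
  exact Finset.sum_congr rfl fun b _ => by
    rw [pd_const_mul (diff_qpart Γ p b x), pd_qpart Γ p hΓ]

lemma diff_psiF (e : Fin 4) (x : Pt) : DifferentiableAt ℝ (fun y => psiF A Γ p y e) x :=
  ((contDiff_psiF A Γ p e).differentiable (by simp)).differentiableAt

lemma pd_wF (hΓ : ∀ a b c, Γ a b c = Γ a c b) (v : Pt) (K : Mat) (a c : Fin 4) (x : Pt) :
    pd (fun y => wF A Γ p v K y a) c x = (A * K * (A⁻¹ * MM Γ p x)) a c := by
  simp only [wF, stdF, mulVec_entry, Pi.add_apply]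
  rw [pd_sum (fun b _ => by
        exact DifferentiableAt.const_mul (by
          exact (differentiableAt_const _).add
            (DifferentiableAt.fun_sum fun d _ => (diff_psiF A Γ p d x).const_mul _)) _) c]
  rw [mul_assoc, Matrix.mul_apply]
  refine Finset.sum_congr rfl fun b _ => ?_
  rw [pd_const_mul (by
        exact (differentiableAt_const _).add
          (DifferentiableAt.fun_sum fun d _ => (diff_psiF A Γ p d x).const_mul _)),
      pd_add (differentiableAt_const _)
        (DifferentiableAt.fun_sum fun d _ => (diff_psiF A Γ p d x).const_mul _),
      pd_const, pd_sum (fun d _ => (diff_psiF A Γ p d x).const_mul _)]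
  rw [zero_add, show (K * (A⁻¹ * MM Γ p x)) b c = ∑ d, K b d * (A⁻¹ * MM Γ p x) d c
      from Matrix.mul_apply]
  simp only [Finset.mul_sum]
  refine Finset.sum_congr rfl fun d _ => ?_
  refine congrArg _ ?_
  rw [pd_const_mul (diff_psiF A Γ p d x), pd_psiF A Γ p hΓ]

lemma rel {x : Pt} (hd : (MM Γ p x).det ≠ 0) (v : Pt) (K : Mat) :
    MM Γ p x *ᵥ fieldF A Γ p v K x = wF A Γ p v K x := by
  rw [fieldF, Matrix.mulVec_mulVec, Matrix.mul_nonsing_inv _ (isUnit_iff_ne_zero.2 hd),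
      Matrix.one_mulVec]

lemma pd_MM_entry (a b c : Fin 4) (x : Pt) :
    pd (fun y => MM Γ p y a b) c x = Γ a b c := by
  simp only [MM_apply]
  rw [pd_add (by fun_prop) (by fun_prop), pd_const,
      pd_sum (fun d _ => by fun_prop) c]
  have : ∀ d : Fin 4, pd (fun y : Pt => Γ a b d * (y d - p d)) c x
      = Γ a b d * (if d = c then 1 else 0) := fun d => by
    rw [pd_const_mul (by fun_prop), pd_coord_sub]
  simp only [this, mul_ite, mul_one, mul_zero, Finset.sum_ite_eq', Finset.mem_univ, if_pos]
  ring

/-- The differentiated relation `Γ·ξ + M·∂ξ = A K A⁻¹ M`. -/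
lemma star (hΓ : ∀ a b c, Γ a b c = Γ a c b) {x : Pt} (hx : (MM Γ p x).det ≠ 0)
    (v : Pt) (K : Mat) (a c : Fin 4) :
    ∑ b, Γ a b c * fieldF A Γ p v K x b
      + ∑ b, MM Γ p x a b * pd (fun y => fieldF A Γ p v K y b) c x
      = (A * K * (A⁻¹ * MM Γ p x)) a c := by
  have hev : (fun y => ∑ b, MM Γ p y a b * fieldF A Γ p v K y b)
      =ᶠ[nhds x] (fun y => wF A Γ p v K y a) := by
    filter_upwards [(isOpen_Od Γ p).mem_nhds hx] with y hy
    rw [← mulVec_entry, rel A Γ p hy]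
  have h1 := pd_congr hev c
  rw [pd_sum (fun b _ => (((contDiff_MM_entry Γ p a b).differentiable (by simp)).differentiableAt).fun_mul
        (diffAt_fieldF A Γ p hx v K b)) c] at h1
  rw [pd_wF A Γ p hΓ] at h1
  have h2 : ∀ b : Fin 4, pd (fun y => MM Γ p y a b * fieldF A Γ p v K y b) c x
      = MM Γ p x a b * pd (fun y => fieldF A Γ p v K y b) c x
        + fieldF A Γ p v K x b * Γ a b c := by
    intro b
    rw [pd_mul (((contDiff_MM_entry Γ p a b).differentiable (by simp)).differentiableAt)
        (diffAt_fieldF A Γ p hx v K b), pd_MM_entry]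
  simp only [h2, Finset.sum_add_distrib] at h1
  rw [← h1]
  rw [add_comm]
  congr 1
  exact Finset.sum_congr rfl fun b _ => by ring

end Calc

section Key
variable (A : Mat) (Γ : Fin 4 → Fin 4 → Fin 4 → ℝ) (p : Pt)

lemma key (hΓ : ∀ a b c, Γ a b c = Γ a c b) (hA : IsUnit A.det) {x : Pt}
    (hx : (MM Γ p x).det ≠ 0) (v : Pt) (K : Mat) (w : Pt) (N : Mat) :
    MM Γ p x *ᵥ bracket (fieldF A Γ p v K) (fieldF A Γ p w N) x
      = A *ᵥ (N *ᵥ stdF v K (psiF A Γ p x) - K *ᵥ stdF w N (psiF A Γ p x)) := by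
  funext a
  have hstar : ∀ (u : Pt) (Kk : Mat) (c : Fin 4),
      ∑ b, MM Γ p x a b * pd (fun y => fieldF A Γ p u Kk y b) c x
        = (A * Kk * (A⁻¹ * MM Γ p x)) a c - ∑ b, Γ a b c * fieldF A Γ p u Kk x b := by
    intro u Kk c
    rw [eq_sub_iff_add_eq, add_comm]
    exact star A Γ p hΓ hx u Kk a c
  have hvec : ∀ (u : Pt) (Kk : Mat) (Kk' : Mat),
      (A * Kk' * (A⁻¹ * MM Γ p x)) *ᵥ fieldF A Γ p u Kk x
        = A *ᵥ (Kk' *ᵥ stdF u Kk (psiF A Γ p x)) := by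
    intro u Kk Kk'
    have h : MM Γ p x *ᵥ fieldF A Γ p u Kk x = A *ᵥ stdF u Kk (psiF A Γ p x) := by
      rw [rel A Γ p hx, wF]
    calc (A * Kk' * (A⁻¹ * MM Γ p x)) *ᵥ fieldF A Γ p u Kk x
        = (A * Kk' * A⁻¹) *ᵥ (MM Γ p x *ᵥ fieldF A Γ p u Kk x) := by
          rw [Matrix.mulVec_mulVec, Matrix.mul_assoc (A * Kk') A⁻¹ (MM Γ p x)]
      _ = (A * Kk' * A⁻¹) *ᵥ (A *ᵥ stdF u Kk (psiF A Γ p x)) := by rw [h]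
      _ = (A * Kk' * (A⁻¹ * A)) *ᵥ stdF u Kk (psiF A Γ p x) := by
          rw [Matrix.mulVec_mulVec, Matrix.mul_assoc (A * Kk') A⁻¹ A]
      _ = (A * Kk') *ᵥ stdF u Kk (psiF A Γ p x) := by
          rw [Matrix.nonsing_inv_mul _ hA, Matrix.mul_one]
      _ = A *ᵥ (Kk' *ᵥ stdF u Kk (psiF A Γ p x)) := by
          rw [Matrix.mulVec_mulVec]
  have main : ∀ (u₁ : Pt) (K₁ : Mat) (u₂ : Pt) (K₂ : Mat),
      ∑ b, MM Γ p x a b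
          * ∑ c, fieldF A Γ p u₁ K₁ x c * pd (fun y => fieldF A Γ p u₂ K₂ y b) c x
        = (A *ᵥ (K₂ *ᵥ stdF u₁ K₁ (psiF A Γ p x))) a
          - ∑ c, ∑ b, Γ a b c * (fieldF A Γ p u₁ K₁ x c * fieldF A Γ p u₂ K₂ x b) := by
    intro u₁ K₁ u₂ K₂
    have e1 : ∑ b, MM Γ p x a b
          * ∑ c, fieldF A Γ p u₁ K₁ x c * pd (fun y => fieldF A Γ p u₂ K₂ y b) c x
        = ∑ c, fieldF A Γ p u₁ K₁ x c
          * ∑ b, MM Γ p x a b * pd (fun y => fieldF A Γ p u₂ K₂ y b) c x := by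
      simp only [Finset.mul_sum]
      rw [Finset.sum_comm]
      exact Finset.sum_congr rfl fun c _ => Finset.sum_congr rfl fun b _ => by ring
    rw [e1]
    simp only [hstar u₂ K₂]
    rw [← hvec u₁ K₁ K₂, mulVec_entry]
    simp only [mul_sub, Finset.sum_sub_distrib, Finset.mul_sum]
    congr 1
    · exact Finset.sum_congr rfl fun c _ => by ring
    · exact Finset.sum_congr rfl fun c _ => Finset.sum_congr rfl fun b _ => by ring
  have gcancel :
      ∑ c, ∑ b, Γ a b c * (fieldF A Γ p v K x c * fieldF A Γ p w N x b)
        = ∑ c, ∑ b, Γ a b c * (fieldF A Γ p w N x c * fieldF A Γ p v K x b) := by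
    conv_rhs => rw [Finset.sum_comm]
    refine Finset.sum_congr rfl fun i _ => Finset.sum_congr rfl fun j _ => ?_
    rw [hΓ a j i]; ring
  have lhs0 : (MM Γ p x *ᵥ bracket (fieldF A Γ p v K) (fieldF A Γ p w N) x) a
      = (∑ b, MM Γ p x a b
          * ∑ c, fieldF A Γ p v K x c * pd (fun y => fieldF A Γ p w N y b) c x)
        - ∑ b, MM Γ p x a b
          * ∑ c, fieldF A Γ p w N x c * pd (fun y => fieldF A Γ p v K y b) c x := by
    rw [mulVec_entry]
    simp only [bracket, mul_sub, Finset.sum_sub_distrib]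
  rw [lhs0, main v K w N, main w N v K, gcancel, Matrix.mulVec_sub, Pi.sub_apply]
  ring

end Key

/-! ### the standard (flat) Poincaré generators and their algebra -/

lemma eta_symm (μ ν : Fin 4) : eta μ ν = eta ν μ := by
  unfold eta
  by_cases h : μ = ν
  · subst h; rfl
  · rw [Matrix.diagonal_apply_ne _ h, Matrix.diagonal_apply_ne _ (Ne.symm h)]

lemma eta_diag_ne (e : Fin 4) : eta e e ≠ 0 := by
  fin_cases e <;> norm_num [eta]

lemma vecMulVec_mulVec (u w z : Pt) :
    Matrix.vecMulVec u w *ᵥ z = (w ⬝ᵥ z) • u := by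
  funext a
  rw [mulVec_entry]
  simp only [Matrix.vecMulVec_apply, Pi.smul_apply, smul_eq_mul, dotProduct,
    Finset.sum_mul]
  exact Finset.sum_congr rfl fun j _ => by ring

lemma vecMulVec_mul_vecMulVec (u w u' w' : Pt) :
    Matrix.vecMulVec u w * Matrix.vecMulVec u' w' = (w ⬝ᵥ u') • Matrix.vecMulVec u w' := by
  ext i j
  simp only [Matrix.mul_apply, Matrix.vecMulVec_apply, Matrix.smul_apply, smul_eq_mul,
    dotProduct, Finset.sum_mul]
  exact Finset.sum_congr rfl fun k _ => by ring

/-- Linear part of the standard Lorentz generator `L̂_{μν}`. -/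
def Kmat (μ ν : Fin 4) : Mat :=
  Matrix.vecMulVec (Pi.single ν 1) (fun j => eta μ j)
    - Matrix.vecMulVec (Pi.single μ 1) (fun j => eta ν j)

lemma dot_eta_single (μ ρ : Fin 4) : (fun j => eta μ j) ⬝ᵥ Pi.single ρ 1 = eta μ ρ := by
  simp [dotProduct, Pi.single_apply, mul_ite, Finset.sum_ite_eq']

lemma Kmat_antisymm (μ ν : Fin 4) : Kmat ν μ = - Kmat μ ν := by
  rw [Kmat, Kmat, neg_sub]

lemma Kmat_mulVec_single (μ ν ρ : Fin 4) :
    Kmat μ ν *ᵥ (Pi.single ρ 1 : Pt)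
      = eta μ ρ • (Pi.single ν 1 : Pt) - eta ν ρ • (Pi.single μ 1 : Pt) := by
  rw [Kmat, Matrix.sub_mulVec, vecMulVec_mulVec, vecMulVec_mulVec, dot_eta_single,
    dot_eta_single]

lemma Kmat_comm (μ ν ρ σ : Fin 4) :
    Kmat ρ σ * Kmat μ ν - Kmat μ ν * Kmat ρ σ
      = eta ν ρ • Kmat μ σ - eta μ ρ • Kmat ν σ - eta ν σ • Kmat μ ρ + eta μ σ • Kmat ν ρ := by
  simp only [Kmat, sub_mul, mul_sub, vecMulVec_mul_vecMulVec, dot_eta_single, smul_sub]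
  rw [eta_symm ρ ν, eta_symm ρ μ, eta_symm σ ν, eta_symm σ μ]
  module

/-- `η·K_{μν}` is antisymmetric. -/
lemma eta_Kmat_entry (μ ν a b : Fin 4) :
    (eta * Kmat μ ν) a b = eta a ν * eta μ b - eta a μ * eta ν b := by
  simp [Matrix.mul_apply, Kmat, Matrix.sub_apply, Matrix.vecMulVec_apply, Pi.single_apply,
    ite_mul, mul_ite, mul_sub, Finset.sum_sub_distrib, Finset.sum_ite_eq', mul_one, mul_zero,
    zero_mul, one_mul]

lemma eta_Kmat_antisymm (μ ν : Fin 4) : (eta * Kmat μ ν)ᵀ = -(eta * Kmat μ ν) := by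
  ext i j
  rw [Matrix.transpose_apply, Matrix.neg_apply, eta_Kmat_entry, eta_Kmat_entry,
    eta_symm j ν, eta_symm j μ, eta_symm μ i, eta_symm ν i]
  ring

section AtP
variable (A : Mat) (Γ : Fin 4 → Fin 4 → Fin 4 → ℝ) (p : Pt)

lemma MMdet_p : (MM Γ p p).det = 1 := by rw [MM_p]; simp

lemma fieldF_at_p (v : Pt) (K : Mat) : fieldF A Γ p v K p = A *ᵥ v := by
  rw [fieldF, MM_p, inv_one, Matrix.one_mulVec, wF, psiF_p, stdF, Matrix.mulVec_zero,
    add_zero]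

lemma sum_one_mul (f : Fin 4 → ℝ) (b : Fin 4) : ∑ b', (1 : Mat) b b' * f b' = f b := by
  simp [Matrix.one_apply, ite_mul, Finset.sum_ite_eq]

lemma pd_fieldF_p (hΓ : ∀ a b c, Γ a b c = Γ a c b) (v : Pt) (K : Mat) (b c : Fin 4) :
    pd (fun y => fieldF A Γ p v K y b) c p
      = (A * K * A⁻¹) b c - ∑ e, Γ b e c * (A *ᵥ v) e := by
  have hd1 : (MM Γ p p).det ≠ 0 := by rw [MMdet_p]; norm_num
  have h := star A Γ p hΓ hd1 v K b c
  rw [MM_p, Matrix.mul_one, sum_one_mul, fieldF_at_p] at h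
  rw [eq_sub_iff_add_eq, add_comm]
  exact h

lemma mulVec_cancel {x : Pt} (hx : (MM Γ p x).det ≠ 0) {u v' : Pt}
    (h : MM Γ p x *ᵥ u = MM Γ p x *ᵥ v') : u = v' := by
  have h2 := congrArg (fun t => (MM Γ p x)⁻¹ *ᵥ t) h
  simpa [Matrix.mulVec_mulVec, Matrix.nonsing_inv_mul _ (isUnit_iff_ne_zero.2 hx),
    Matrix.one_mulVec] using h2

lemma fieldF_neg0 (K : Mat) (x : Pt) : fieldF A Γ p 0 (-K) x = - fieldF A Γ p 0 K x := by
  simp [fieldF, wF, stdF, Matrix.neg_mulVec, Matrix.mulVec_neg]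

end AtP

end LAP

open LAP

/-- **Every relativistic spacetime admits local approximate Poincaré symmetries\*.**
For every spacetime `(M, g)` and point `p ∈ M` there are a neighborhood `O` of `p` and
ten smooth, linearly independent vector fields on `O` — four translation generators
`T μ` and six Lorentz generators `L μ ν = −L ν μ` — whose Lie brackets satisfy exactly
the commutation relations of the Poincaré algebra, and such that the Lie derivative of
`g` along each of them vanishes at `p`. -/
theorem local_approximate_poincare_symmetries (S : Spacetime)
    (p : Pt) (hp : p ∈ S.carrier) :
    ∃ O : Set Pt, IsOpen O ∧ p ∈ O ∧ O ⊆ S.carrier ∧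
    ∃ (T : Fin 4 → Pt → Pt) (L : Fin 4 → Fin 4 → Pt → Pt),
      (∀ μ, ContDiffOn ℝ (⊤ : ℕ∞) (T μ) O) ∧
      (∀ μ ν, ContDiffOn ℝ (⊤ : ℕ∞) (L μ ν) O) ∧
      (∀ μ ν, ∀ x ∈ O, L μ ν x = - L ν μ x) ∧
      -- the ten fields are linearly independent (on `O`)
      (∀ (c : Fin 4 → ℝ) (d : Fin 4 → Fin 4 → ℝ), (∀ μ ν, d μ ν = - d ν μ) →
        (∀ x ∈ O, ((∑ μ, c μ • T μ x) + ∑ μ, ∑ ν, d μ ν • L μ ν x) = 0) →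
        c = 0 ∧ d = 0) ∧
      -- commutation relations of the Poincaré algebra
      (∀ μ ν, ∀ x ∈ O, bracket (T μ) (T ν) x = 0) ∧
      (∀ μ ν ρ, ∀ x ∈ O,
        bracket (L μ ν) (T ρ) x = eta ν ρ • T μ x - eta μ ρ • T ν x) ∧
      (∀ μ ν ρ σ, ∀ x ∈ O,
        bracket (L μ ν) (L ρ σ) x =
          eta ν ρ • L μ σ x - eta μ ρ • L ν σ x
            - eta ν σ • L μ ρ x + eta μ σ • L ν ρ x) ∧
      -- each generator is an approximate local Killing field of `g` at `p`
      (∀ μ, ∀ a b, lieD (T μ) S.metric p a b = 0) ∧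
      (∀ μ ν, ∀ a b, lieD (L μ ν) S.metric p a b = 0) := by
  classical
  obtain ⟨A, hAdet, hAeq⟩ := S.lorentz p hp
  -- symmetry of the metric near p
  have hgsym : ∀ x ∈ S.carrier, ∀ i j, S.metric x i j = S.metric x j i := by
    intro x hx i j
    have h := congrFun (congrFun (S.symm x hx) i) j
    rw [Matrix.transpose_apply] at h
    exact h.symm
  have hpdsym : ∀ i j k, pd (fun y => S.metric y i j) k p = pd (fun y => S.metric y j i) k p := by
    intro i j k
    apply pd_congr
    filter_upwards [S.isOpen.mem_nhds hp] with y hy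
    exact hgsym y hy i j
  have hGsym : ∀ i j, S.metric p i j = S.metric p j i := hgsym p hp
  have hGdet : IsUnit (S.metric p).det := by
    have hdet := congrArg Matrix.det hAeq
    rw [Matrix.det_mul, Matrix.det_mul, Matrix.det_transpose] at hdet
    have hetadet : eta.det = -1 := by
      rw [eta, Matrix.det_diagonal]
      norm_num [Fin.prod_univ_four]
      show (-1:ℝ) * -1 = 1
      norm_num
    rw [hetadet] at hdet
    rw [isUnit_iff_ne_zero]
    intro h0
    rw [h0] at hdet
    norm_num at hdet
  set Γ₀ : Fin 4 → Fin 4 → Fin 4 → ℝ := christoffel S.metric p with hΓ₀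
  have hΓsym : ∀ a b c, Γ₀ a b c = Γ₀ a c b := by
    intro a b c
    show christoffel S.metric p a b c = christoffel S.metric p a c b
    unfold christoffel
    refine congrArg _ (Finset.sum_congr rfl fun d _ => ?_)
    rw [hpdsym b c d]
    ring
  -- Levi-Civita compatibility at p
  have hGG : S.metric p * (S.metric p)⁻¹ = 1 := Matrix.mul_nonsing_inv _ hGdet
  have collapse : ∀ (b' : Fin 4) (H' : Fin 4 → ℝ),
      ∑ c, S.metric p b' c * ((1/2) * ∑ d, (S.metric p)⁻¹ c d * H' d) = (1/2) * H' b' := by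
    intro b' H'
    have e1 : ∑ c, S.metric p b' c * ((1/2) * ∑ d, (S.metric p)⁻¹ c d * H' d)
        = (1/2) * ∑ d, (∑ c, S.metric p b' c * (S.metric p)⁻¹ c d) * H' d := by
      simp only [Finset.mul_sum, Finset.sum_mul]
      rw [Finset.sum_comm]
      exact Finset.sum_congr rfl fun c _ => Finset.sum_congr rfl fun d _ => by ring
    rw [e1]
    have e2 : ∀ d, (∑ c, S.metric p b' c * (S.metric p)⁻¹ c d) = (1 : Mat) b' d := by
      intro d
      rw [← Matrix.mul_apply, hGG]
    simp only [e2]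
    simp [Matrix.one_apply, ite_mul, Finset.sum_ite_eq]
  have hcompat : ∀ f a b : Fin 4,
      (∑ c, S.metric p b c * Γ₀ c f a) + (∑ c, S.metric p a c * Γ₀ c f b)
        = pd (fun y => S.metric y a b) f p := by
    intro f a b
    have h1 : ∑ c, S.metric p b c * Γ₀ c f a
        = (1/2) * (pd (fun y => S.metric y b a) f p + pd (fun y => S.metric y b f) a p
            - pd (fun y => S.metric y f a) b p) := by
      have := collapse b (fun d => pd (fun y => S.metric y d a) f p
        + pd (fun y => S.metric y d f) a p - pd (fun y => S.metric y f a) d p)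
      rw [← this]
      exact Finset.sum_congr rfl fun c _ => by rw [hΓ₀]; rfl
    have h2 : ∑ c, S.metric p a c * Γ₀ c f b
        = (1/2) * (pd (fun y => S.metric y a b) f p + pd (fun y => S.metric y a f) b p
            - pd (fun y => S.metric y f b) a p) := by
      have := collapse a (fun d => pd (fun y => S.metric y d b) f p
        + pd (fun y => S.metric y d f) b p - pd (fun y => S.metric y f b) d p)
      rw [← this]
      exact Finset.sum_congr rfl fun c _ => by rw [hΓ₀]; rfl
    rw [h1, h2, hpdsym b a f, hpdsym b f a, hpdsym a f b]
    ring
  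
  -- the neighborhood
  set O : Set Pt := S.carrier ∩ {x : Pt | (MM Γ₀ p x).det ≠ 0} with hO
  have hOopen : IsOpen O := S.isOpen.inter (isOpen_Od Γ₀ p)
  have hpO : p ∈ O := ⟨hp, by show (MM Γ₀ p p).det ≠ 0; rw [MMdet_p]; norm_num⟩
  have hdet1 : (MM Γ₀ p p).det ≠ 0 := hpO.2
  refine ⟨O, hOopen, hpO, Set.inter_subset_left,
    fun μ => fieldF A Γ₀ p (Pi.single μ 1) 0,
    fun μ ν => fieldF A Γ₀ p 0 (Kmat μ ν), ?_, ?_, ?_, ?_, ?_, ?_, ?_, ?_, ?_⟩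
  · -- smoothness of T
    intro μ
    exact contDiffOn_pi.2 fun a =>
      (contDiffOn_fieldF A Γ₀ p _ _ a).mono Set.inter_subset_right
  · -- smoothness of L
    intro μ ν
    exact contDiffOn_pi.2 fun a =>
      (contDiffOn_fieldF A Γ₀ p _ _ a).mono Set.inter_subset_right
  · -- antisymmetry of L
    intro μ ν x _
    show fieldF A Γ₀ p 0 (Kmat μ ν) x = - fieldF A Γ₀ p 0 (Kmat ν μ) x
    rw [Kmat_antisymm μ ν, fieldF_neg0, neg_neg]
  · -- linear independence
    intro c d hdanti hvan
    have hTp : ∀ μ (e : Fin 4), fieldF A Γ₀ p (Pi.single μ 1) 0 p e = A e μ := by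
      intro μ e; rw [fieldF_at_p]; simp
    have hLp : ∀ μ ν, fieldF A Γ₀ p 0 (Kmat μ ν) p = 0 := by
      intro μ ν; rw [fieldF_at_p, Matrix.mulVec_zero]
    have hc0 : c = 0 := by
      have h0 := hvan p hpO
      have hAc : A *ᵥ c = 0 := by
        funext e
        have h0e := congrFun h0 e
        simp only [Finset.sum_apply, Pi.add_apply, Pi.smul_apply, smul_eq_mul, hLp,
          Pi.zero_apply, mul_zero, Finset.sum_const_zero, add_zero, hTp] at h0e
        rw [mulVec_entry, Pi.zero_apply, ← h0e]
        exact Finset.sum_congr rfl fun j _ => by ring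
      have h2 := congrArg (fun t => A⁻¹ *ᵥ t) hAc
      simpa [Matrix.mulVec_mulVec, Matrix.nonsing_inv_mul _ hAdet, Matrix.one_mulVec,
        Matrix.mulVec_zero] using h2
    refine ⟨hc0, ?_⟩
    have hvan2 : ∀ x ∈ O, (∑ μ, ∑ ν, d μ ν • fieldF A Γ₀ p 0 (Kmat μ ν) x) = (0 : Pt) := by
      intro x hx
      have h := hvan x hx
      rw [hc0] at h
      simpa using h
    have hpdzero : ∀ a e, ∑ μ, ∑ ν, d μ ν * (A * Kmat μ ν * A⁻¹) a e = 0 := by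
      intro a e
      have hdiff1 : ∀ μ1 ν1, DifferentiableAt ℝ
          (fun y => d μ1 ν1 * fieldF A Γ₀ p 0 (Kmat μ1 ν1) y a) p :=
        fun μ1 ν1 => (diffAt_fieldF A Γ₀ p hdet1 _ _ a).const_mul _
      have hev : (fun y => ∑ μ, ∑ ν, d μ ν * fieldF A Γ₀ p 0 (Kmat μ ν) y a)
          =ᶠ[nhds p] (fun _ => (0:ℝ)) := by
        filter_upwards [hOopen.mem_nhds hpO] with y hy
        have h := congrFun (hvan2 y hy) a
        simpa [Finset.sum_apply, Pi.smul_apply, smul_eq_mul] using h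
      have hpd := pd_congr hev e
      rw [pd_const, pd_sum (fun μ1 _ => DifferentiableAt.fun_sum fun ν1 _ => hdiff1 μ1 ν1) e] at hpd
      rw [← hpd]
      refine Finset.sum_congr rfl fun μ1 _ => ?_
      rw [pd_sum (fun ν1 _ => hdiff1 μ1 ν1) e]
      refine Finset.sum_congr rfl fun ν1 _ => ?_
      rw [pd_const_mul (diffAt_fieldF A Γ₀ p hdet1 _ _ a), pd_fieldF_p A Γ₀ p hΓsym]
      simp [Matrix.mulVec_zero]
    have hD0 : (∑ μ, ∑ ν, d μ ν • Kmat μ ν) = (0 : Mat) := by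
      have hADA : A * (∑ μ, ∑ ν, d μ ν • Kmat μ ν) * A⁻¹ = 0 := by
        have hlin : A * (∑ μ, ∑ ν, d μ ν • Kmat μ ν) * A⁻¹
            = ∑ μ, ∑ ν, d μ ν • (A * Kmat μ ν * A⁻¹) := by
          simp only [Matrix.mul_sum, Matrix.sum_mul, Matrix.mul_smul, Matrix.smul_mul]
        rw [hlin]
        ext a e
        simp only [Matrix.sum_apply, Matrix.smul_apply, smul_eq_mul, Matrix.zero_apply]
        exact hpdzero a e
      calc (∑ μ, ∑ ν, d μ ν • Kmat μ ν)
          = A⁻¹ * (A * (∑ μ, ∑ ν, d μ ν • Kmat μ ν) * A⁻¹) * A := by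
            simp only [← Matrix.mul_assoc]
            rw [Matrix.nonsing_inv_mul _ hAdet, Matrix.one_mul,
              Matrix.nonsing_inv_mul_cancel_right _ _ hAdet]
        _ = 0 := by rw [hADA, Matrix.mul_zero, Matrix.zero_mul]
    have hent : ∀ a e, ∑ μ, ∑ ν, d μ ν * Kmat μ ν a e = 0 := by
      intro a e
      have h := congrArg (fun M : Mat => M a e) hD0
      simpa [Matrix.sum_apply, Matrix.smul_apply, smul_eq_mul] using h
    have hKent : ∀ μ ν a e : Fin 4, Kmat μ ν a e
        = (if a = ν then eta μ e else 0) - (if a = μ then eta ν e else 0) := by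
      intro μ ν a e
      simp [Kmat, Matrix.sub_apply, Matrix.vecMulVec_apply, Pi.single_apply, ite_mul,
        one_mul, zero_mul]
    funext μ0 a0
    have h := hent a0 μ0
    have h1 : ∑ μ, ∑ ν, d μ ν * ((if a0 = ν then eta μ μ0 else 0)
          - (if a0 = μ then eta ν μ0 else 0))
        = (∑ μ, d μ a0 * eta μ μ0) - ∑ ν, d a0 ν * eta ν μ0 := by
      simp only [mul_sub, Finset.sum_sub_distrib]
      congr 1
      · refine Finset.sum_congr rfl fun μ _ => ?_
        simp [mul_ite, Finset.sum_ite_eq]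
      · rw [Finset.sum_comm]
        refine Finset.sum_congr rfl fun ν _ => ?_
        simp [mul_ite, Finset.sum_ite_eq]
    simp only [hKent] at h
    rw [h1] at h
    have h2 : ∑ ν, d a0 ν * eta ν μ0 = -∑ ν, d ν a0 * eta ν μ0 := by
      rw [← Finset.sum_neg_distrib]
      exact Finset.sum_congr rfl fun ν _ => by rw [hdanti a0 ν]; ring
    rw [h2] at h
    have h3 : ∑ μ, d μ a0 * eta μ μ0 = d μ0 a0 * eta μ0 μ0 :=
      Finset.sum_eq_single μ0
        (fun b _ hb => by rw [eta, Matrix.diagonal_apply_ne _ hb, mul_zero])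
        (fun hμ => absurd (Finset.mem_univ _) hμ)
    rw [h3] at h
    have h4 : d μ0 a0 * (2 * eta μ0 μ0) = 0 := by linarith
    have h5 := (mul_eq_zero.1 h4).resolve_right
      (mul_ne_zero two_ne_zero (eta_diag_ne μ0))
    exact h5
  · -- [T,T] = 0
    intro μ ν x hx
    have hd : (MM Γ₀ p x).det ≠ 0 := hx.2
    show bracket (fieldF A Γ₀ p (Pi.single μ 1) 0) (fieldF A Γ₀ p (Pi.single ν 1) 0) x = 0
    apply mulVec_cancel Γ₀ p hd
    rw [key A Γ₀ p hΓsym hAdet hd _ _ _ _, Matrix.mulVec_zero]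
    simp [Matrix.zero_mulVec, sub_self, Matrix.mulVec_zero]
  · -- [L,T]
    intro μ ν ρ x hx
    have hd : (MM Γ₀ p x).det ≠ 0 := hx.2
    show bracket (fieldF A Γ₀ p 0 (Kmat μ ν)) (fieldF A Γ₀ p (Pi.single ρ 1) 0) x
      = eta ν ρ • fieldF A Γ₀ p (Pi.single μ 1) 0 x - eta μ ρ • fieldF A Γ₀ p (Pi.single ν 1) 0 x
    apply mulVec_cancel Γ₀ p hd
    have hstd : ∀ σ', stdF (Pi.single σ' 1 : Pt) (0 : Mat) (psiF A Γ₀ p x)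
        = (Pi.single σ' 1 : Pt) := by
      intro σ'; rw [stdF, Matrix.zero_mulVec, add_zero]
    rw [key A Γ₀ p hΓsym hAdet hd _ _ _ _]
    simp only [hstd, Matrix.zero_mulVec, Matrix.mulVec_zero, zero_sub, Matrix.mulVec_neg,
      Kmat_mulVec_single, Matrix.mulVec_sub, Matrix.mulVec_smul, rel A Γ₀ p hd, wF]
    all_goals module
  · -- [L,L]
    intro μ ν ρ σ x hx
    have hd : (MM Γ₀ p x).det ≠ 0 := hx.2
    show bracket (fieldF A Γ₀ p 0 (Kmat μ ν)) (fieldF A Γ₀ p 0 (Kmat ρ σ)) x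
      = eta ν ρ • fieldF A Γ₀ p 0 (Kmat μ σ) x - eta μ ρ • fieldF A Γ₀ p 0 (Kmat ν σ) x
        - eta ν σ • fieldF A Γ₀ p 0 (Kmat μ ρ) x + eta μ σ • fieldF A Γ₀ p 0 (Kmat ν ρ) x
    apply mulVec_cancel Γ₀ p hd
    have hstd0 : ∀ K : Mat, stdF (0 : Pt) K (psiF A Γ₀ p x) = K *ᵥ psiF A Γ₀ p x := by
      intro K; rw [stdF, zero_add]
    rw [key A Γ₀ p hΓsym hAdet hd _ _ _ _]
    simp only [hstd0]
    rw [Matrix.mulVec_mulVec, Matrix.mulVec_mulVec, ← Matrix.sub_mulVec, Kmat_comm μ ν ρ σ]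
    simp only [Matrix.mulVec_add, Matrix.mulVec_sub, Matrix.mulVec_smul,
      rel A Γ₀ p hd, wF, hstd0, Matrix.mulVec_mulVec, mul_sub, mul_add, Matrix.mul_smul,
      Matrix.add_mulVec, Matrix.sub_mulVec, Matrix.smul_mulVec]
    all_goals module
  · -- Killing for T
    intro μ a b
    have hval : ∀ e, fieldF A Γ₀ p (Pi.single μ 1) 0 p e = A e μ := by
      intro e; rw [fieldF_at_p]; simp
    have hpdT : ∀ e k, pd (fun y => fieldF A Γ₀ p (Pi.single μ 1) 0 y e) k p
        = -∑ e', Γ₀ e e' k * A e' μ := by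
      intro e k
      rw [pd_fieldF_p A Γ₀ p hΓsym]
      simp [Matrix.mul_zero, Matrix.zero_mul, Matrix.zero_apply, Matrix.mulVec_single]
    simp only [lieD, hval, hpdT]
    have s1 : ∑ c, S.metric p c b * -(∑ e', Γ₀ c e' a * A e' μ)
        = -∑ e', A e' μ * ∑ c, S.metric p b c * Γ₀ c e' a := by
      simp only [mul_neg, Finset.sum_neg_distrib, Finset.mul_sum]
      rw [Finset.sum_comm]
      refine congrArg Neg.neg (Finset.sum_congr rfl fun e' _ => ?_)
      refine Finset.sum_congr rfl fun cc _ => ?_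
      rw [hGsym cc b]; ring
    have s2 : ∑ c, S.metric p a c * -(∑ e', Γ₀ c e' b * A e' μ)
        = -∑ e', A e' μ * ∑ c, S.metric p a c * Γ₀ c e' b := by
      simp only [mul_neg, Finset.sum_neg_distrib, Finset.mul_sum]
      rw [Finset.sum_comm]
      refine congrArg Neg.neg (Finset.sum_congr rfl fun e' _ => ?_)
      refine Finset.sum_congr rfl fun cc _ => ?_
      ring
    have s0 : ∑ c, A c μ * pd (fun y => S.metric y a b) c p
        = ∑ e', A e' μ * ((∑ c, S.metric p b c * Γ₀ c e' a)
            + ∑ c, S.metric p a c * Γ₀ c e' b) :=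
      Finset.sum_congr rfl fun e' _ => by rw [hcompat e' a b]
    rw [s0, s1, s2]
    simp only [mul_add, Finset.sum_add_distrib]
    ring
  · -- Killing for L
    intro μ ν a b
    have hvalL : fieldF A Γ₀ p 0 (Kmat μ ν) p = 0 := by
      rw [fieldF_at_p, Matrix.mulVec_zero]
    have hpdL : ∀ e k, pd (fun y => fieldF A Γ₀ p 0 (Kmat μ ν) y e) k p
        = (A * Kmat μ ν * A⁻¹) e k := by
      intro e k
      rw [pd_fieldF_p A Γ₀ p hΓsym]
      simp [Matrix.mulVec_zero]
    have hAtdet : IsUnit (Aᵀ).det := by rw [Matrix.det_transpose]; exact hAdet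
    have h1' : S.metric p * A = (A⁻¹)ᵀ * eta := by
      have hAeq' : Aᵀ * (S.metric p * A) = eta := by rw [← Matrix.mul_assoc]; exact hAeq
      rw [← hAeq', Matrix.transpose_nonsing_inv, Matrix.nonsing_inv_mul_cancel_left _ _ hAtdet]
    have hGR : S.metric p * (A * Kmat μ ν * A⁻¹) = (A⁻¹)ᵀ * (eta * Kmat μ ν) * A⁻¹ := by
      simp only [← Matrix.mul_assoc]
      rw [h1']
    have hanti : (S.metric p * (A * Kmat μ ν * A⁻¹))ᵀ
        = -(S.metric p * (A * Kmat μ ν * A⁻¹)) := by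
      rw [hGR, Matrix.transpose_mul, Matrix.transpose_mul, Matrix.transpose_transpose,
        eta_Kmat_antisymm, neg_mul, mul_neg]
      exact congrArg Neg.neg (Matrix.mul_assoc _ _ _).symm
    have hentry : ∀ i j, (S.metric p * (A * Kmat μ ν * A⁻¹)) j i
        = -(S.metric p * (A * Kmat μ ν * A⁻¹)) i j := by
      intro i j
      have := congrFun (congrFun hanti i) j
      rw [Matrix.transpose_apply] at this
      rw [this]
      rfl
    simp only [lieD, hvalL, hpdL, Pi.zero_apply, zero_mul, Finset.sum_const_zero, zero_add]
    have e1 : ∑ c, S.metric p c b * (A * Kmat μ ν * A⁻¹) c a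
        = (S.metric p * (A * Kmat μ ν * A⁻¹)) b a := by
      rw [Matrix.mul_apply]
      exact Finset.sum_congr rfl fun cc _ => by rw [hGsym cc b]
    have e2 : ∑ c, S.metric p a c * (A * Kmat μ ν * A⁻¹) c b
        = (S.metric p * (A * Kmat μ ν * A⁻¹)) a b := (Matrix.mul_apply).symm
    rw [e1, e2]
    have := hentry a b
    linarith

end
end
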